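/- arXiv:math/9610210 — 2 statements merged into one kernel-verified Lean document; each statement's English description precedes it below -/
import Mathlib

section
/- Let X be a separable left-dominant or right-dominant sequence space with canonical basis (e_n), and let (u_n) be a normalized sequence of pairwise disjointly supported vectors in X whose closed linear span is the range of a bounded projection on X. Then (u_n) is permutatively equivalent to a subsequence (e_{k_n}) of the canonical basis of X. -/
open Function Filter
open scoped BigOperators ENNReal

noncomputable section

namespace CK

/-- The formal (finite-support) linear combination `∑ᶠ i, a i • e i`. -/
def vecSum {X : Type*} [NormedAddCommGroup X] [NormedSpace ℝ X] (e : ℕ → X) (a : ℕ → ℝ) : X :=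
  ∑ᶠ i, a i • e i

/-- `u` is an unconditional basis of `X`: every vector has a unique unconditional
(i.e. unordered, in the sense of `HasSum`) expansion along `u`. -/
def IsUnconditionalBasis {ι : Type*} {X : Type*} [NormedAddCommGroup X] [NormedSpace ℝ X]
    (u : ι → X) : Prop :=
  ∀ x : X, ∃! a : ι → ℝ, HasSum (fun i => a i • u i) x

/-- Two systems of vectors are equivalent: the formal identity between finite linear
combinations is bounded both ways (hence extends to an isomorphism of closed spans). -/
def BasisEquiv {ι : Type*} {X Y : Type*} [NormedAddCommGroup X] [NormedSpace ℝ X]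
    [NormedAddCommGroup Y] [NormedSpace ℝ Y] (u : ι → X) (v : ι → Y) : Prop :=
  ∃ c C : ℝ, 0 < c ∧ ∀ (a : ι → ℝ) (s : Finset ι),
    c * ‖∑ i ∈ s, a i • u i‖ ≤ ‖∑ i ∈ s, a i • v i‖ ∧
      ‖∑ i ∈ s, a i • v i‖ ≤ C * ‖∑ i ∈ s, a i • u i‖

/-- Permutative equivalence of two systems of vectors. -/
def PermutativelyEquiv {ι : Type*} {X Y : Type*} [NormedAddCommGroup X] [NormedSpace ℝ X]
    [NormedAddCommGroup Y] [NormedSpace ℝ Y] (u : ι → X) (v : ι → Y) : Prop :=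
  ∃ π : Equiv.Perm ι, BasisEquiv u (fun i => v (π i))

/-- `X` has a unique unconditional basis: any two normalized unconditional bases are
permutatively equivalent. -/
def HasUniqueUnconditionalBasis (X : Type*) [NormedAddCommGroup X] [NormedSpace ℝ X] : Prop :=
  ∀ u v : ℕ → X, IsUnconditionalBasis u → IsUnconditionalBasis v →
    (∀ n, ‖u n‖ = 1) → (∀ n, ‖v n‖ = 1) → PermutativelyEquiv u v

/-- The closed linear span of a sequence. -/
def spanCl {X : Type*} [NormedAddCommGroup X] [NormedSpace ℝ X] (u : ℕ → X) : Submodule ℝ X :=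
  (Submodule.span ℝ (Set.range u)).topologicalClosure

/-- The members of a sequence, as elements of their closed linear span. -/
def inSpanCl {X : Type*} [NormedAddCommGroup X] [NormedSpace ℝ X] (u : ℕ → X) (n : ℕ) :
    ↥(spanCl u) :=
  ⟨u n, (Submodule.span ℝ (Set.range u)).le_topologicalClosure (Submodule.subset_span ⟨n, rfl⟩)⟩

/-- `u` is an unconditional basic sequence: it is an unconditional basis of its closed span. -/
def IsUncondBasicSeq {X : Type*} [NormedAddCommGroup X] [NormedSpace ℝ X] (u : ℕ → X) : Prop :=
  IsUnconditionalBasis (inSpanCl u)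

/-- The closed span of `u` is the range of a bounded linear projection. -/
def IsComplementedSeq {X : Type*} [NormedAddCommGroup X] [NormedSpace ℝ X] (u : ℕ → X) : Prop :=
  ∃ P : X →L[ℝ] X, P.comp P = P ∧ LinearMap.range (P : X →ₗ[ℝ] X) = spanCl u

/-- A finite linear combination of the `f j`, as an element of the closed span. -/
def spanElt {X : Type*} [NormedAddCommGroup X] [NormedSpace ℝ X] (f : ℕ → X) (a : ℕ → ℝ)
    (s : Finset ℕ) : ↥(spanCl f) :=
  ⟨∑ j ∈ s, a j • f j, by
    apply (Submodule.span ℝ (Set.range f)).le_topologicalClosure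
    exact Submodule.sum_mem _ fun j _ => Submodule.smul_mem _ _ (Submodule.subset_span ⟨j, rfl⟩)⟩

/-- The lattice (in the coordinatewise order induced by the basic sequence `f`) given by the
closed span of `f` is sufficiently lattice Euclidean: uniformly complemented lattice copies of
`ℓ₂ⁿ`, the projections being realized by operators `S, T` with `S ∘ T = id`, `‖S‖‖T‖ ≤ M` and
`S` a lattice homomorphism (expressed coordinatewise on finite combinations of the `f j`). -/
def SuffLatticeEuclideanSeq {X : Type*} [NormedAddCommGroup X] [NormedSpace ℝ X]
    (f : ℕ → X) : Prop :=
  ∃ M : ℝ, ∀ n : ℕ, ∃ (S : ↥(spanCl f) →L[ℝ] EuclideanSpace ℝ (Fin n))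
    (T : EuclideanSpace ℝ (Fin n) →L[ℝ] ↥(spanCl f)),
    (∀ v, S (T v) = v) ∧ ‖S‖ * ‖T‖ ≤ M ∧
    ∀ (a b : ℕ → ℝ) (s : Finset ℕ) (i : Fin n),
      S (spanElt f (fun j => max (a j) (b j)) s) i =
        max (S (spanElt f a s) i) (S (spanElt f b s) i)

/-- The canonical basis of the square `Z ⊕ Z`:
`(u 0, 0), (0, u 0), (u 1, 0), (0, u 1), …`. -/
def squareBasis {X : Type*} [NormedAddCommGroup X] [NormedSpace ℝ X] (u : ℕ → X) : ℕ → X × X :=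
  fun k => if Even k then (u (k / 2), 0) else (0, u (k / 2))

/-- The system `e` is left-dominant with constant `γ`. -/
def LeftDominantWith {X : Type*} [NormedAddCommGroup X] [NormedSpace ℝ X]
    (e : ℕ → X) (γ : ℝ) : Prop :=
  ∀ (n : ℕ) (u v : Fin n → ℕ → ℝ),
    (∀ k, (Function.support (u k)).Finite) → (∀ k, (Function.support (v k)).Finite) →
    (Pairwise fun k l => Disjoint (Function.support (u k)) (Function.support (u l))) →
    (Pairwise fun k l => Disjoint (Function.support (v k)) (Function.support (v l))) →
    (∀ k, ∀ i ∈ Function.support (u k), ∀ j ∈ Function.support (v k), i < j) →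
    (∀ k, ‖vecSum e (v k)‖ ≤ ‖vecSum e (u k)‖) →
    ‖vecSum e (fun i => ∑ k, v k i)‖ ≤ γ * ‖vecSum e (fun i => ∑ k, u k i)‖

/-- The system `e` is right-dominant with constant `γ`. -/
def RightDominantWith {X : Type*} [NormedAddCommGroup X] [NormedSpace ℝ X]
    (e : ℕ → X) (γ : ℝ) : Prop :=
  ∀ (n : ℕ) (u v : Fin n → ℕ → ℝ),
    (∀ k, (Function.support (u k)).Finite) → (∀ k, (Function.support (v k)).Finite) →
    (Pairwise fun k l => Disjoint (Function.support (u k)) (Function.support (u l))) →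
    (Pairwise fun k l => Disjoint (Function.support (v k)) (Function.support (v l))) →
    (∀ k, ∀ i ∈ Function.support (u k), ∀ j ∈ Function.support (v k), i < j) →
    (∀ k, ‖vecSum e (u k)‖ ≤ ‖vecSum e (v k)‖) →
    ‖vecSum e (fun i => ∑ k, u k i)‖ ≤ γ * ‖vecSum e (fun i => ∑ k, v k i)‖

def IsLeftDominant {X : Type*} [NormedAddCommGroup X] [NormedSpace ℝ X] (e : ℕ → X) : Prop :=
  ∃ γ : ℝ, 1 ≤ γ ∧ LeftDominantWith e γ

def IsRightDominant {X : Type*} [NormedAddCommGroup X] [NormedSpace ℝ X] (e : ℕ → X) : Prop :=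
  ∃ γ : ℝ, 1 ≤ γ ∧ RightDominantWith e γ

/-- The norm of the unit vector basis of `ℓ_p^n` (`p = ∞` giving the sup norm). -/
def lpNormFin (p : ℝ≥0∞) {n : ℕ} (c : Fin n → ℝ) : ℝ :=
  if p = ⊤ then ⨆ k, |c k| else (∑ k, |c k| ^ p.toReal) ^ (1 / p.toReal)

/-- `ℓ_p` is disjointly finitely representable in the sequence space spanned by `e`. -/
def DisjointlyFinitelyRepresentable (p : ℝ≥0∞) {X : Type*} [NormedAddCommGroup X]
    [NormedSpace ℝ X] (e : ℕ → X) : Prop :=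
  ∀ (n : ℕ) (ε : ℝ), 0 < ε → ∃ a : Fin n → ℕ → ℝ,
    (∀ k, (Function.support (a k)).Finite) ∧
    (Pairwise fun k l => Disjoint (Function.support (a k)) (Function.support (a l))) ∧
    ∀ c : Fin n → ℝ,
      (1 + ε)⁻¹ * lpNormFin p c ≤ ‖vecSum e fun i => ∑ k, c k * a k i‖ ∧
      ‖vecSum e fun i => ∑ k, c k * a k i‖ ≤ (1 + ε) * lpNormFin p c

/-- `X` is sufficiently Euclidean: `ℓ₂ⁿ`'s are uniformly complementably representable in `X`. -/
def SufficientlyEuclidean (X : Type*) [NormedAddCommGroup X] [NormedSpace ℝ X] : Prop :=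
  ∃ M : ℝ, ∀ n : ℕ, ∃ (S : X →L[ℝ] EuclideanSpace ℝ (Fin n))
    (T : EuclideanSpace ℝ (Fin n) →L[ℝ] X), (∀ v, S (T v) = v) ∧ ‖S‖ * ‖T‖ ≤ M

/-- Left dominance for an extended-real-valued Köthe norm on sequences. -/
def ENormLeftDominant (N : (ℕ → ℝ) → ℝ≥0∞) (γ : ℝ) : Prop :=
  ∀ (n : ℕ) (u v : Fin n → ℕ → ℝ),
    (∀ k, (Function.support (u k)).Finite) → (∀ k, (Function.support (v k)).Finite) →
    (Pairwise fun k l => Disjoint (Function.support (u k)) (Function.support (u l))) →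
    (Pairwise fun k l => Disjoint (Function.support (v k)) (Function.support (v l))) →
    (∀ k, ∀ i ∈ Function.support (u k), ∀ j ∈ Function.support (v k), i < j) →
    (∀ k, N (v k) ≤ N (u k)) →
    N (fun i => ∑ k, v k i) ≤ ENNReal.ofReal γ * N (fun i => ∑ k, u k i)

/-- Right dominance for an extended-real-valued Köthe norm on sequences. -/
def ENormRightDominant (N : (ℕ → ℝ) → ℝ≥0∞) (γ : ℝ) : Prop :=
  ∀ (n : ℕ) (u v : Fin n → ℕ → ℝ),
    (∀ k, (Function.support (u k)).Finite) → (∀ k, (Function.support (v k)).Finite) →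
    (Pairwise fun k l => Disjoint (Function.support (u k)) (Function.support (u l))) →
    (Pairwise fun k l => Disjoint (Function.support (v k)) (Function.support (v l))) →
    (∀ k, ∀ i ∈ Function.support (u k), ∀ j ∈ Function.support (v k), i < j) →
    (∀ k, N (u k) ≤ N (v k)) →
    N (fun i => ∑ k, u k i) ≤ ENNReal.ofReal γ * N (fun i => ∑ k, v k i)

/-- The Köthe dual norm: `‖f‖_{X*} = sup { Σ |f n g n| : ‖g‖_X ≤ 1 }`. -/
def kotheDual (N : (ℕ → ℝ) → ℝ≥0∞) : (ℕ → ℝ) → ℝ≥0∞ :=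
  fun f => ⨆ g : {g : ℕ → ℝ // N g ≤ 1}, ∑' n, ENNReal.ofReal |f n * (g : ℕ → ℝ) n|

/-- The Nakano norm of a finitely supported sequence. -/
def nakanoNormFin (p : ℕ → ℝ) (s : Finset ℕ) (a : ℕ → ℝ) : ℝ :=
  sInf {lam : ℝ | 0 < lam ∧ ∑ i ∈ s, (|a i| / lam) ^ (p i) ≤ 1}

/-- The Orlicz (Luxemburg) norm of a finitely supported sequence. -/
def orliczNormFin (F : ℝ → ℝ) (s : Finset ℕ) (a : ℕ → ℝ) : ℝ :=
  sInf {lam : ℝ | 0 < lam ∧ ∑ i ∈ s, F (|a i| / lam) ≤ 1}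

/-- The Orlicz function `F(t) ∼ t |log t|^{-a}`:
`F(t) = t^{1+a}` for `e⁻¹ ≤ t ≤ 1` and `F(t) = e^{-a} t |log t|^{-a}` for `0 < t ≤ e⁻¹`. -/
def Fone (a : ℝ) : ℝ → ℝ := fun t =>
  if t ≤ Real.exp (-1) then Real.exp (-a) * t * |Real.log t| ^ (-a) else t ^ (1 + a)

/-- The Orlicz function `F(t) ∼ t² |log t|⁻¹`:
`F(t) = t³` for `e⁻¹ ≤ t ≤ 1` and `F(t) = e⁻² t² |log t|⁻¹` for `0 < t ≤ e⁻¹`. -/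
def Ftwo : ℝ → ℝ := fun t =>
  if t ≤ Real.exp (-1) then Real.exp (-2) * t ^ (2 : ℕ) * |Real.log t|⁻¹ else t ^ (3 : ℕ)

/-- A norm on `c₀₀ = ℕ →₀ ℝ` satisfying the defining inequalities of the Tsirelson norm. -/
def IsTsiCandidate (N : (ℕ →₀ ℝ) → ℝ) : Prop :=
  (∀ x, 0 ≤ N x) ∧ (∀ (c : ℝ) (x), N (c • x) = |c| * N x) ∧
  (∀ x y, N (x + y) ≤ N x + N y) ∧
  (∀ x, ∀ i : ℕ, |x i| ≤ N x) ∧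
  (∀ (n : ℕ) (xs : Fin n → (ℕ →₀ ℝ)),
    (∀ j k : Fin n, j < k → ∀ i ∈ (xs j).support, ∀ i' ∈ (xs k).support, i < i') →
    (∀ j : Fin n, ∀ i ∈ (xs j).support, n ≤ i) →
    (1 / 2 : ℝ) * ∑ j, N (xs j) ≤ N (∑ j, xs j))

/-- The Tsirelson norm: the minimal norm on `c₀₀` dominating the sup norm and satisfying
`(1/2) Σ ‖x_j‖ ≤ ‖Σ x_j‖` for successive vectors `n ≤ supp x₁ < ⋯ < supp x_n`. -/
def IsTsirelsonNorm (N : (ℕ →₀ ℝ) → ℝ) : Prop :=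
  IsTsiCandidate N ∧ ∀ N', IsTsiCandidate N' → ∀ x, N x ≤ N' x

/-- A norm on `c₀₀` satisfying the defining inequalities of the disjoint-version Tsirelson
norm `‖·‖_T^#`. -/
def IsTsiSharpCandidate (N : (ℕ →₀ ℝ) → ℝ) : Prop :=
  (∀ x, 0 ≤ N x) ∧ (∀ (c : ℝ) (x), N (c • x) = |c| * N x) ∧
  (∀ x y, N (x + y) ≤ N x + N y) ∧
  (∀ x, ∀ i : ℕ, |x i| ≤ N x) ∧
  (∀ (n : ℕ) (xs : Fin (2 * n) → (ℕ →₀ ℝ)),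
    (Pairwise fun j k => Disjoint (xs j).support (xs k).support) →
    (∀ j, ∀ i ∈ (xs j).support, n ≤ i) →
    (1 / 2 : ℝ) * ∑ j, N (xs j) ≤ N (∑ j, xs j))

/-- The norm `‖·‖_T^#`: the least norm on `c₀₀` dominating the sup norm and satisfying
`(1/2) Σ_{j=1}^{2n} ‖x_j‖ ≤ ‖Σ x_j‖` for `2n` disjointly supported vectors with
`min supp x_j ≥ n`. -/
def IsTsirelsonSharpNorm (N : (ℕ →₀ ℝ) → ℝ) : Prop :=
  IsTsiSharpCandidate N ∧ ∀ N', IsTsiSharpCandidate N' → ∀ x, N x ≤ N' x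

open scoped Classical in
/-- `V(A)`: the set of `j` such that for some `i ∈ A` and some `k`, `(i,k) ∈ G` and
`(j,k) ∈ G`. -/
def Vstep (n : ℕ) (G : Finset (Fin n × Fin n)) (A : Finset (Fin n)) : Finset (Fin n) :=
  Finset.univ.filter fun j => ∃ i ∈ A, ∃ k, (i, k) ∈ G ∧ (j, k) ∈ G

open scoped Classical in
/-- `G^r`: the set of pairs `(i,j)` such that `(k,j) ∈ G` for some `k ∈ V^r({i})`. -/
def Gpow (n : ℕ) (G : Finset (Fin n × Fin n)) (r : ℕ) : Finset (Fin n × Fin n) :=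
  Finset.univ.filter fun p => ∃ k, (k, p.2) ∈ G ∧ k ∈ (Vstep n G)^[r] {p.1}

/-- A family of finite-dimensional sequence spaces (given by normalized monotone bases `b i`)
is sufficiently lattice Euclidean. -/
def SuffLatticeEuclideanFam {ι : Type*} {E : ι → Type*} [∀ i, NormedAddCommGroup (E i)]
    [∀ i, NormedSpace ℝ (E i)] {n : ι → ℕ} (b : ∀ i, Fin (n i) → E i) : Prop :=
  ∃ M : ℝ, ∀ m : ℕ, ∃ i : ι, ∃ (S : E i →L[ℝ] EuclideanSpace ℝ (Fin m))
    (T : EuclideanSpace ℝ (Fin m) →L[ℝ] E i),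
    (∀ v, S (T v) = v) ∧ ‖S‖ * ‖T‖ ≤ M ∧
    ∀ (a c : Fin (n i) → ℝ) (k : Fin m),
      S (∑ j, max (a j) (c j) • b i j) k =
        max (S (∑ j, a j • b i j) k) (S (∑ j, c j • b i j) k)

end CK

namespace CK

section proof3

set_option linter.unusedSectionVars false

variable {X : Type*} [NormedAddCommGroup X] [NormedSpace ℝ X] [CompleteSpace X] {e : ℕ → X}

/-- The lattice-norm hypothesis, abbreviated. -/
def LatNorm (e : ℕ → X) : Prop :=
  ∀ a b : ℕ → ℝ, (Function.support a).Finite → (Function.support b).Finite →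
    (∀ i, |a i| ≤ |b i|) → ‖vecSum e a‖ ≤ ‖vecSum e b‖

lemma vecSum_eq_sum (e : ℕ → X) (c : ℕ → ℝ) (F : Finset ℕ) (h : Function.support c ⊆ ↑F) :
    vecSum e c = ∑ i ∈ F, c i • e i := by
  refine finsum_eq_sum_of_support_subset _ ?_
  intro i hi
  rcases Function.mem_support.mp (Function.support_smul_subset_left c e hi) with hc
  exact Finset.mem_coe.mp (h hc)

lemma finset_norm_le (hlat : LatNorm e) (b c : ℕ → ℝ) (hd : ∀ i, |b i| ≤ |c i|) (F : Finset ℕ) :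
    ‖∑ i ∈ F, b i • e i‖ ≤ ‖∑ i ∈ F, c i • e i‖ := by
  have hb : vecSum e (fun i => if i ∈ F then b i else 0) = ∑ i ∈ F, b i • e i := by
    rw [vecSum_eq_sum e _ F (by intro i hi; simp only [Function.mem_support, ne_eq, ite_eq_right_iff, not_forall] at hi; exact Finset.mem_coe.mpr hi.1)]
    exact Finset.sum_congr rfl fun i hi => by simp [hi]
  have hc : vecSum e (fun i => if i ∈ F then c i else 0) = ∑ i ∈ F, c i • e i := by
    rw [vecSum_eq_sum e _ F (by intro i hi; simp only [Function.mem_support, ne_eq, ite_eq_right_iff, not_forall] at hi; exact Finset.mem_coe.mpr hi.1)]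
    exact Finset.sum_congr rfl fun i hi => by simp [hi]
  have := hlat (fun i => if i ∈ F then b i else 0) (fun i => if i ∈ F then c i else 0)
    (Set.Finite.subset F.finite_toSet (by intro i hi; simp only [Function.mem_support, ne_eq, ite_eq_right_iff, not_forall] at hi; exact Finset.mem_coe.mpr hi.1))
    (Set.Finite.subset F.finite_toSet (by intro i hi; simp only [Function.mem_support, ne_eq, ite_eq_right_iff, not_forall] at hi; exact Finset.mem_coe.mpr hi.1))
    (fun i => by by_cases hi : i ∈ F <;> simp [hi, hd i])
  rwa [hb, hc] at this

lemma norm_le_of_dom (hlat : LatNorm e) {b c : ℕ → ℝ} {y x : X}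
    (hy : HasSum (fun i => b i • e i) y) (hx : HasSum (fun i => c i • e i) x)
    (hd : ∀ i, |b i| ≤ |c i|) : ‖y‖ ≤ ‖x‖ :=
  le_of_tendsto_of_tendsto' hy.norm hx.norm (finset_norm_le hlat b c hd)

lemma summable_of_dom (hlat : LatNorm e) {b c : ℕ → ℝ} {x : X}
    (hx : HasSum (fun i => c i • e i) x) (hd : ∀ i, |b i| ≤ |c i|) :
    Summable (fun i => b i • e i) := by
  rw [summable_iff_vanishing]
  intro U hU
  rcases Metric.mem_nhds_iff.mp hU with ⟨r, hr, hball⟩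
  obtain ⟨s, hs⟩ := summable_iff_vanishing.mp hx.summable (Metric.ball 0 r)
    (Metric.ball_mem_nhds 0 hr)
  refine ⟨s, fun t ht => hball ?_⟩
  have h1 : ‖∑ i ∈ t, b i • e i‖ ≤ ‖∑ i ∈ t, c i • e i‖ := finset_norm_le hlat b c hd t
  have h2 := hs t ht
  simp only [Metric.mem_ball, dist_zero_right] at h2 ⊢
  exact lt_of_le_of_lt h1 h2

/-- Coordinates of a vector with respect to the unconditional basis `e`. -/
def Ecoords (he : IsUnconditionalBasis e) (x : X) : ℕ → ℝ := (he x).choose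

lemma Ecoords_hasSum (he : IsUnconditionalBasis e) (x : X) :
    HasSum (fun i => Ecoords he x i • e i) x := (he x).choose_spec.1

lemma Ecoords_eq (he : IsUnconditionalBasis e) {w : ℕ → ℝ} {x : X}
    (h : HasSum (fun i => w i • e i) x) : Ecoords he x = w :=
  ((he x).choose_spec.2 w h).symm

lemma hasSum_single_vec (e : ℕ → X) (i : ℕ) (c : ℝ) :
    HasSum (fun j => (if j = i then c else 0) • e j) (c • e i) := by
  have h := hasSum_ite_eq i (c • e i)
  convert h using 1
  funext j
  by_cases hj : j = i <;> simp [hj]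

lemma abs_Ecoords_le (he : IsUnconditionalBasis e) (hlat : LatNorm e) (hone : ∀ j, ‖e j‖ = 1)
    (x : X) (i : ℕ) : |Ecoords he x i| ≤ ‖x‖ := by
  have h1 := hasSum_single_vec e i (Ecoords he x i)
  have h2 := norm_le_of_dom hlat h1 (Ecoords_hasSum he x)
    (fun j => by by_cases hj : j = i <;> simp [hj])
  calc |Ecoords he x i| = ‖Ecoords he x i • e i‖ := by
        rw [norm_smul, hone i, Real.norm_eq_abs, mul_one]
    _ ≤ ‖x‖ := h2

/-- The `i`-th coordinate functional, as a continuous linear map. -/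
def coordL (he : IsUnconditionalBasis e) (hlat : LatNorm e) (hone : ∀ j, ‖e j‖ = 1)
    (i : ℕ) : X →L[ℝ] ℝ :=
  LinearMap.mkContinuous
    { toFun := fun x => Ecoords he x i
      map_add' := fun x y => by
        have : Ecoords he (x + y) = fun j => Ecoords he x j + Ecoords he y j :=
          Ecoords_eq he (by
            have := (Ecoords_hasSum he x).add (Ecoords_hasSum he y)
            convert this using 1
            funext j
            rw [add_smul])
        exact congrFun this i
      map_smul' := fun c x => by
        have : Ecoords he (c • x) = fun j => c * Ecoords he x j :=
          Ecoords_eq he (by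
            have := (Ecoords_hasSum he x).const_smul c
            convert this using 1
            funext j
            rw [smul_smul])
        simpa using congrFun this i }
    1 (fun x => by simpa using abs_Ecoords_le he hlat hone x i)

lemma coordL_apply (he : IsUnconditionalBasis e) (hlat : LatNorm e) (hone : ∀ j, ‖e j‖ = 1)
    (i : ℕ) (x : X) : coordL he hlat hone i x = Ecoords he x i := rfl

lemma ptw_abs_le {t : Finset ℕ} {w w' : ℕ → ℕ → ℝ}
    (hdisj : ∀ n ∈ t, ∀ m ∈ t, n ≠ m → Disjoint (Function.support (w n)) (Function.support (w m)))
    (hdom : ∀ n ∈ t, ∀ i, |w' n i| ≤ |w n i|) (i : ℕ) :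
    |∑ n ∈ t, w' n i| ≤ |∑ n ∈ t, w n i| := by
  by_cases hex : ∃ n ∈ t, w n i ≠ 0
  · obtain ⟨n₀, hn₀, hw₀⟩ := hex
    have hz : ∀ m ∈ t, m ≠ n₀ → w m i = 0 := by
      intro m hm hne
      by_contra h
      exact Set.disjoint_left.mp (hdisj m hm n₀ hn₀ hne) h hw₀
    have hz' : ∀ m ∈ t, m ≠ n₀ → w' m i = 0 := by
      intro m hm hne
      have h := hdom m hm i
      rw [hz m hm hne, abs_zero] at h
      exact abs_eq_zero.mp (le_antisymm h (abs_nonneg _))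
    rw [Finset.sum_eq_single_of_mem n₀ hn₀ hz, Finset.sum_eq_single_of_mem n₀ hn₀ hz']
    exact hdom n₀ hn₀ i
  · push_neg at hex
    have h1 : ∑ n ∈ t, w n i = 0 := Finset.sum_eq_zero fun n hn => hex n hn
    have h2 : ∑ n ∈ t, w' n i = 0 := Finset.sum_eq_zero fun n hn => by
      have h := hdom n hn i
      rw [hex n hn, abs_zero] at h
      exact abs_eq_zero.mp (le_antisymm h (abs_nonneg _))
    rw [h1, h2]

lemma hasSum_comb {t : Finset ℕ} {z : ℕ → X} {w : ℕ → ℕ → ℝ}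
    (hz : ∀ n ∈ t, HasSum (fun i => w n i • e i) (z n)) :
    HasSum (fun i => (∑ n ∈ t, w n i) • e i) (∑ n ∈ t, z n) := by
  have := hasSum_sum hz
  convert this using 1
  funext i
  rw [Finset.sum_smul]

lemma master_norm_le (hlat : LatNorm e) {t : Finset ℕ} {z z' : ℕ → X} {w w' : ℕ → ℕ → ℝ}
    (hz : ∀ n ∈ t, HasSum (fun i => w n i • e i) (z n))
    (hz' : ∀ n ∈ t, HasSum (fun i => w' n i • e i) (z' n))
    (hdisj : ∀ n ∈ t, ∀ m ∈ t, n ≠ m → Disjoint (Function.support (w n)) (Function.support (w m)))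
    (hdom : ∀ n ∈ t, ∀ i, |w' n i| ≤ |w n i|) :
    ‖∑ n ∈ t, z' n‖ ≤ ‖∑ n ∈ t, z n‖ :=
  norm_le_of_dom hlat (hasSum_comb hz') (hasSum_comb hz) (ptw_abs_le hdisj hdom)

lemma hasSum_trunc (e : ℕ → X) (F : Finset ℕ) (w : ℕ → ℝ) :
    HasSum (fun i => (if i ∈ F then w i else 0) • e i) (∑ i ∈ F, w i • e i) := by
  have h := hasSum_sum_of_ne_finset_zero (s := F) (L := SummationFilter.unconditional ℕ)
    (f := fun i => (if i ∈ F then w i else 0) • e i) (fun i hi => by simp [hi])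
  have he' : ∑ i ∈ F, (if i ∈ F then w i else 0) • e i = ∑ i ∈ F, w i • e i :=
    Finset.sum_congr rfl fun i hi => by simp [hi]
  rwa [he'] at h

lemma norm_trunc_le (hlat : LatNorm e) (F : Finset ℕ) {w : ℕ → ℝ} {x : X}
    (hx : HasSum (fun i => w i • e i) x) : ‖∑ i ∈ F, w i • e i‖ ≤ ‖x‖ :=
  norm_le_of_dom hlat (hasSum_trunc e F w) hx
    (fun i => by by_cases hi : i ∈ F <;> simp [hi])

lemma sum_enum {M : Type*} [AddCommMonoid M] (s : Finset ℕ) (g : ℕ → M) :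
    ∑ k : Fin s.card, g ((s.equivFin.symm k : s) : ℕ) = ∑ n ∈ s, g n := by
  rw [← Finset.sum_coe_sort s g]
  exact Equiv.sum_comp s.equivFin.symm (fun m : s => g (m : ℕ))

lemma extCore {γ : ℝ} (hγ : 0 ≤ γ) (hlat : LatNorm e) (R : ℕ → ℕ → Prop)
    (hkey : ∀ (m : ℕ) (U V : Fin m → ℕ → ℝ),
      (∀ k, (Function.support (U k)).Finite) → (∀ k, (Function.support (V k)).Finite) →
      (Pairwise fun k l => Disjoint (Function.support (U k)) (Function.support (U l))) →
      (Pairwise fun k l => Disjoint (Function.support (V k)) (Function.support (V l))) →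
      (∀ k, ∀ i ∈ Function.support (U k), ∀ j ∈ Function.support (V k), R i j) →
      (∀ k, ‖vecSum e (V k)‖ ≤ ‖vecSum e (U k)‖) →
      ‖vecSum e (fun i => ∑ k, V k i)‖ ≤ γ * ‖vecSum e (fun i => ∑ k, U k i)‖)
    (s : Finset ℕ) (x y : ℕ → X) (wx wy : ℕ → ℕ → ℝ)
    (hx : ∀ n ∈ s, HasSum (fun i => wx n i • e i) (x n))
    (hy : ∀ n ∈ s, HasSum (fun i => wy n i • e i) (y n))
    (hdx : ∀ n ∈ s, ∀ m ∈ s, n ≠ m →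
      Disjoint (Function.support (wx n)) (Function.support (wx m)))
    (hdy : ∀ n ∈ s, ∀ m ∈ s, n ≠ m →
      Disjoint (Function.support (wy n)) (Function.support (wy m)))
    (hord : ∀ n ∈ s, ∀ i ∈ Function.support (wx n), ∀ j ∈ Function.support (wy n), R i j)
    (hn : ∀ n ∈ s, ‖y n‖ ≤ ‖x n‖) :
    ‖∑ n ∈ s, y n‖ ≤ γ * ‖∑ n ∈ s, x n‖ := by
  suffices h : ∀ η : ℝ, 0 < η → η < 1 →
      (1 - η) * ‖∑ n ∈ s, y n‖ ≤ γ * ‖∑ n ∈ s, x n‖ by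
    by_contra hcon
    push_neg at hcon
    set A := ‖∑ n ∈ s, y n‖ with hAdef
    set B := γ * ‖∑ n ∈ s, x n‖ with hBdef
    have hB : 0 ≤ B := mul_nonneg hγ (norm_nonneg _)
    have hA : 0 < A := lt_of_le_of_lt hB hcon
    have hη0 : 0 < (A - B) / (2 * A) := div_pos (by linarith) (by linarith)
    have hη1 : (A - B) / (2 * A) < 1 := by
      rw [div_lt_one (by linarith)]
      linarith
    have h1 := h _ hη0 hη1
    have e1 : (1 - (A - B) / (2 * A)) * A = (A + B) / 2 := by
      field_simp
      ring
    rw [e1] at h1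
    linarith
  intro η hη0 hη1
  have hev : ∀ᶠ F : Finset ℕ in atTop, ∀ n ∈ s,
      (1 - η) * ‖x n‖ ≤ ‖∑ i ∈ F, wx n i • e i‖ := by
    rw [eventually_all_finset]
    intro n hns
    rcases eq_or_lt_of_le (norm_nonneg (x n)) with h0 | h0
    · exact Filter.Eventually.of_forall fun F => by
        rw [← h0, mul_zero]
        exact norm_nonneg _
    · have hlt : (1 - η) * ‖x n‖ < ‖x n‖ := by nlinarith
      exact ((hx n hns).norm.eventually (eventually_gt_nhds hlt)).mono
        fun F hF => le_of_lt hF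
  have hineq : ∀ᶠ F : Finset ℕ in atTop,
      (1 - η) * ‖∑ n ∈ s, ∑ i ∈ F, wy n i • e i‖ ≤
        γ * ‖∑ n ∈ s, ∑ i ∈ F, wx n i • e i‖ := by
    filter_upwards [hev] with F hF
    classical
    set ι : Fin s.card → ℕ := fun k => ((s.equivFin.symm k : s) : ℕ) with hι
    have hιmem : ∀ k, ι k ∈ s := fun k => (s.equivFin.symm k).2
    have hιinj : Function.Injective ι :=
      fun k l hkl => s.equivFin.symm.injective (Subtype.ext hkl)
    set U : Fin s.card → ℕ → ℝ := fun k i => if i ∈ F then wx (ι k) i else 0 with hU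
    set V : Fin s.card → ℕ → ℝ :=
      fun k i => (1 - η) * (if i ∈ F then wy (ι k) i else 0) with hV
    have hUsupp : ∀ k, Function.support (U k) ⊆ ↑F := by
      intro k i hi
      simp only [hU, Function.mem_support] at hi
      by_contra hiF
      rw [if_neg (by simpa using hiF)] at hi
      exact hi rfl
    have hVsupp : ∀ k, Function.support (V k) ⊆ ↑F := by
      intro k i hi
      simp only [hV, Function.mem_support] at hi
      by_contra hiF
      rw [if_neg (by simpa using hiF), mul_zero] at hi
      exact hi rfl
    have hUx : ∀ k, Function.support (U k) ⊆ Function.support (wx (ι k)) := by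
      intro k i hi
      simp only [hU, Function.mem_support] at hi ⊢
      intro h0
      apply hi
      split <;> simp [h0]
    have hVy : ∀ k, Function.support (V k) ⊆ Function.support (wy (ι k)) := by
      intro k i hi
      simp only [hV, Function.mem_support] at hi ⊢
      intro h0
      apply hi
      split <;> simp [h0]
    have hUvec : ∀ k, vecSum e (U k) = ∑ i ∈ F, wx (ι k) i • e i := by
      intro k
      rw [vecSum_eq_sum e _ F (hUsupp k)]
      exact Finset.sum_congr rfl fun i hi => by simp [hU, hi]
    have hVvec : ∀ k, vecSum e (V k) = (1 - η) • ∑ i ∈ F, wy (ι k) i • e i := by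
      intro k
      rw [vecSum_eq_sum e _ F (hVsupp k), Finset.smul_sum]
      refine Finset.sum_congr rfl fun i hi => ?_
      simp only [hV, hi, if_pos, smul_smul]
    have hkey' := hkey s.card U V
      (fun k => Set.Finite.subset F.finite_toSet (hUsupp k))
      (fun k => Set.Finite.subset F.finite_toSet (hVsupp k))
      (fun k l hkl => Disjoint.mono (hUx k) (hUx l)
        (hdx (ι k) (hιmem k) (ι l) (hιmem l) (fun hc => hkl (hιinj hc))))
      (fun k l hkl => Disjoint.mono (hVy k) (hVy l)
        (hdy (ι k) (hιmem k) (ι l) (hιmem l) (fun hc => hkl (hιinj hc))))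
      (fun k i hi j hj => hord (ι k) (hιmem k) i (hUx k hi) j (hVy k hj))
      (fun k => by
        rw [hUvec k, hVvec k, norm_smul, Real.norm_eq_abs,
          abs_of_pos (by linarith : (0:ℝ) < 1 - η)]
        calc (1 - η) * ‖∑ i ∈ F, wy (ι k) i • e i‖
            ≤ (1 - η) * ‖y (ι k)‖ := by
              have := norm_trunc_le hlat F (hy (ι k) (hιmem k))
              nlinarith
          _ ≤ (1 - η) * ‖x (ι k)‖ := by
              have := hn (ι k) (hιmem k)
              nlinarith
          _ ≤ ‖∑ i ∈ F, wx (ι k) i • e i‖ := hF (ι k) (hιmem k))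
    have hUsum : vecSum e (fun i => ∑ k, U k i) = ∑ n ∈ s, ∑ i ∈ F, wx n i • e i := by
      have hsupp : Function.support (fun i => ∑ k, U k i) ⊆ ↑F := by
        intro i hi
        simp only [Function.mem_support] at hi
        by_contra hiF
        apply hi
        apply Finset.sum_eq_zero
        intro k _
        simp [hU, (by simpa using hiF : ¬ i ∈ F)]
      rw [vecSum_eq_sum e _ F hsupp, ← sum_enum s (fun n => ∑ i ∈ F, wx n i • e i)]
      calc ∑ i ∈ F, (∑ k, U k i) • e i
          = ∑ i ∈ F, ∑ k, U k i • e i :=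
            Finset.sum_congr rfl fun i _ => Finset.sum_smul
        _ = ∑ k, ∑ i ∈ F, U k i • e i := Finset.sum_comm
        _ = ∑ k, ∑ i ∈ F, wx (ι k) i • e i :=
            Finset.sum_congr rfl fun k _ => Finset.sum_congr rfl fun i hi => by simp [hU, hi]
    have hVsum : vecSum e (fun i => ∑ k, V k i) =
        (1 - η) • ∑ n ∈ s, ∑ i ∈ F, wy n i • e i := by
      have hsupp : Function.support (fun i => ∑ k, V k i) ⊆ ↑F := by
        intro i hi
        simp only [Function.mem_support] at hi
        by_contra hiF
        apply hi
        apply Finset.sum_eq_zero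
        intro k _
        simp [hV, (by simpa using hiF : ¬ i ∈ F)]
      rw [vecSum_eq_sum e _ F hsupp, ← sum_enum s (fun n => ∑ i ∈ F, wy n i • e i),
        Finset.smul_sum]
      calc ∑ i ∈ F, (∑ k, V k i) • e i
          = ∑ i ∈ F, ∑ k, V k i • e i :=
            Finset.sum_congr rfl fun i _ => Finset.sum_smul
        _ = ∑ k, ∑ i ∈ F, V k i • e i := Finset.sum_comm
        _ = ∑ k, (1 - η) • ∑ i ∈ F, wy (ι k) i • e i := by
            refine Finset.sum_congr rfl fun k _ => ?_
            rw [Finset.smul_sum]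
            refine Finset.sum_congr rfl fun i hi => ?_
            simp only [hV, hi, if_pos, smul_smul]
    rw [hUsum, hVsum] at hkey'
    rwa [norm_smul, Real.norm_eq_abs,
      abs_of_pos (by linarith : (0:ℝ) < 1 - η)] at hkey'
  have hty : Tendsto (fun F : Finset ℕ => ∑ n ∈ s, ∑ i ∈ F, wy n i • e i)
      atTop (nhds (∑ n ∈ s, y n)) := tendsto_finset_sum s fun n hns => hy n hns
  have htx : Tendsto (fun F : Finset ℕ => ∑ n ∈ s, ∑ i ∈ F, wx n i • e i)
      atTop (nhds (∑ n ∈ s, x n)) := tendsto_finset_sum s fun n hns => hx n hns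
  exact le_of_tendsto_of_tendsto (hty.norm.const_mul (1 - η)) (htx.norm.const_mul γ) hineq

variable {u : ℕ → X} {a : ℕ → ℕ → ℝ}

lemma hasSum_comb_u (ha : ∀ n, HasSum (fun i => a n i • e i) (u n)) (t : Finset ℕ) (d : ℕ → ℝ) :
    HasSum (fun i => (∑ l ∈ t, d l * a l i) • e i) (∑ l ∈ t, d l • u l) :=
  hasSum_comb (fun l _ => by simpa [smul_smul] using (ha l).const_smul (d l))

lemma comb_norm_le (hlat : LatNorm e) (ha : ∀ n, HasSum (fun i => a n i • e i) (u n))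
    (hdisj : Pairwise fun m n => Disjoint (Function.support (a m)) (Function.support (a n)))
    (t : Finset ℕ) (g h : ℕ → ℝ) (hgh : ∀ n ∈ t, |g n| ≤ |h n|) :
    ‖∑ n ∈ t, g n • u n‖ ≤ ‖∑ n ∈ t, h n • u n‖ := by
  refine master_norm_le hlat (w := fun n i => h n * a n i) (w' := fun n i => g n * a n i)
    (fun n _ => by simpa [smul_smul] using (ha n).const_smul (h n))
    (fun n _ => by simpa [smul_smul] using (ha n).const_smul (g n))
    (fun n _ m _ hnm => Disjoint.mono ?_ ?_ (hdisj hnm))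
    (fun n hn i => by
      rw [abs_mul, abs_mul]
      exact mul_le_mul_of_nonneg_right (hgh n hn) (abs_nonneg _))
  · intro i hi
    simp only [Function.mem_support] at hi ⊢
    exact fun h0 => hi (by rw [h0, mul_zero])
  · intro i hi
    simp only [Function.mem_support] at hi ⊢
    exact fun h0 => hi (by rw [h0, mul_zero])

/-- Coordinate functionals along the disjoint sequence `u`, defined through a chosen
coordinate in the support of each `a m`. -/
def ubar (he : IsUnconditionalBasis e) (hlat : LatNorm e) (hone : ∀ j, ‖e j‖ = 1)
    (a : ℕ → ℕ → ℝ) (i₀ : ℕ → ℕ) (m : ℕ) : X →L[ℝ] ℝ :=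
  (a m (i₀ m))⁻¹ • coordL he hlat hone (i₀ m)

lemma ubar_apply (he : IsUnconditionalBasis e) (hlat : LatNorm e) (hone : ∀ j, ‖e j‖ = 1)
    (a : ℕ → ℕ → ℝ) (i₀ : ℕ → ℕ) (m : ℕ) (y : X) :
    ubar he hlat hone a i₀ m y = (a m (i₀ m))⁻¹ * Ecoords he y (i₀ m) := rfl

lemma ubar_comb (he : IsUnconditionalBasis e) (hlat : LatNorm e) (hone : ∀ j, ‖e j‖ = 1)
    (ha : ∀ n, HasSum (fun i => a n i • e i) (u n))
    (hdisj : Pairwise fun m n => Disjoint (Function.support (a m)) (Function.support (a n)))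
    (i₀ : ℕ → ℕ) (hi₀ : ∀ m, a m (i₀ m) ≠ 0) (m : ℕ) (t : Finset ℕ) (d : ℕ → ℝ) :
    ubar he hlat hone a i₀ m (∑ l ∈ t, d l • u l) = if m ∈ t then d m else 0 := by
  have hc : Ecoords he (∑ l ∈ t, d l • u l) = fun i => ∑ l ∈ t, d l * a l i :=
    Ecoords_eq he (hasSum_comb_u ha t d)
  rw [ubar_apply]
  simp only [hc]
  have hz : ∀ l, l ≠ m → a l (i₀ m) = 0 := by
    intro l hne
    by_contra h0
    exact Set.disjoint_left.mp (hdisj hne) h0 (hi₀ m)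
  by_cases hm : m ∈ t
  · rw [if_pos hm, Finset.sum_eq_single_of_mem m hm
      (fun l _ hne => by rw [hz l hne, mul_zero])]
    field_simp
    exact mul_div_cancel_left₀ _ (hi₀ m)
  · rw [if_neg hm, Finset.sum_eq_zero, mul_zero]
    intro l hl
    rw [hz l (fun hlm => hm (hlm ▸ hl)), mul_zero]

lemma u_mem_spanCl (n : ℕ) : u n ∈ spanCl u :=
  (Submodule.span ℝ (Set.range u)).le_topologicalClosure (Submodule.subset_span ⟨n, rfl⟩)

lemma span_ineq (he : IsUnconditionalBasis e) (hlat : LatNorm e) (hone : ∀ j, ‖e j‖ = 1)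
    (ha : ∀ n, HasSum (fun i => a n i • e i) (u n))
    (hdisj : Pairwise fun m n => Disjoint (Function.support (a m)) (Function.support (a n)))
    (i₀ : ℕ → ℕ) (hi₀ : ∀ m, a m (i₀ m) ≠ 0)
    (s : Finset ℕ) (ε : ℕ → ℝ) (hε : ∀ m, |ε m| ≤ 1) {y : X} (hy : y ∈ spanCl u) :
    ‖∑ m ∈ s, (ε m * ubar he hlat hone a i₀ m y) • u m‖ ≤ ‖y‖ := by
  classical
  set Φ : X → X := fun z => ∑ m ∈ s, (ε m * ubar he hlat hone a i₀ m z) • u m with hΦdef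
  have hΦcont : Continuous Φ := by
    apply continuous_finset_sum
    intro m _
    exact (continuous_const.mul (ubar he hlat hone a i₀ m).continuous).smul continuous_const
  have hspan : ∀ z ∈ Submodule.span ℝ (Set.range u), ‖Φ z‖ ≤ ‖z‖ := by
    intro z hz
    obtain ⟨c, hc⟩ := Finsupp.mem_span_range_iff_exists_finsupp.mp hz
    have hzc : z = ∑ l ∈ c.support, c l • u l := by
      rw [← hc]; rfl
    have hub : ∀ m, ubar he hlat hone a i₀ m z = if m ∈ c.support then c m else 0 := by
      intro m
      rw [hzc]
      exact ubar_comb he hlat hone ha hdisj i₀ hi₀ m c.support c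
    set t := s ∪ c.support with ht
    have hL : Φ z = ∑ m ∈ t,
        (if m ∈ s then ε m * (if m ∈ c.support then c m else 0) else 0) • u m := by
      have e1 : Φ z = ∑ m ∈ s,
          (if m ∈ s then ε m * (if m ∈ c.support then c m else 0) else 0) • u m := by
        rw [hΦdef]
        exact Finset.sum_congr rfl fun m hm => by rw [if_pos hm, hub m]
      rw [e1]
      exact Finset.sum_subset Finset.subset_union_left
        (fun m _ hms => by rw [if_neg hms, zero_smul])
    have hR : z = ∑ m ∈ t, (if m ∈ c.support then c m else 0) • u m := by
      have e1 : z = ∑ m ∈ c.support, (if m ∈ c.support then c m else 0) • u m := by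
        rw [hzc]
        exact Finset.sum_congr rfl fun m hm => by rw [if_pos hm]
      rw [e1]
      exact Finset.sum_subset Finset.subset_union_right
        (fun m _ hms => by rw [if_neg hms, zero_smul])
    rw [hL]
    nth_rewrite 1 [hR]
    refine comb_norm_le hlat ha hdisj t _ _ ?_
    intro m _
    by_cases hms : m ∈ s
    · rw [if_pos hms, abs_mul]
      calc |ε m| * |if m ∈ c.support then c m else 0|
          ≤ 1 * |if m ∈ c.support then c m else 0| :=
            mul_le_mul_of_nonneg_right (hε m) (abs_nonneg _)
        _ = _ := one_mul _
    · rw [if_neg hms, abs_zero]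
      exact abs_nonneg _
  have hy2 : y ∈ closure (↑(Submodule.span ℝ (Set.range u)) : Set X) := by
    rw [← Submodule.topologicalClosure_coe]
    exact hy
  obtain ⟨f, hf1, hf2⟩ := mem_closure_iff_seq_limit.mp hy2
  have h1 : Tendsto (fun j => ‖Φ (f j)‖) atTop (nhds ‖Φ y‖) :=
    ((hΦcont.tendsto y).comp hf2).norm
  have h2 : Tendsto (fun j => ‖f j‖) atTop (nhds ‖y‖) := hf2.norm
  exact le_of_tendsto_of_tendsto' h1 h2 fun j => hspan (f j) (hf1 j)

lemma ubar_le_norm (he : IsUnconditionalBasis e) (hlat : LatNorm e) (hone : ∀ j, ‖e j‖ = 1)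
    (ha : ∀ n, HasSum (fun i => a n i • e i) (u n)) (hnorm : ∀ n, ‖u n‖ = 1)
    (hdisj : Pairwise fun m n => Disjoint (Function.support (a m)) (Function.support (a n)))
    (i₀ : ℕ → ℕ) (hi₀ : ∀ m, a m (i₀ m) ≠ 0) (m : ℕ) {y : X} (hy : y ∈ spanCl u) :
    |ubar he hlat hone a i₀ m y| ≤ ‖y‖ := by
  have h := span_ineq he hlat hone ha hdisj i₀ hi₀ {m} (fun _ => 1) (fun _ => by simp) hy
  rw [Finset.sum_singleton, one_mul, norm_smul, Real.norm_eq_abs, hnorm m, mul_one] at h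
  exact h

/-- Sign function attached to a finite set. -/
def sg (t : Finset ℕ) (m : ℕ) : ℝ := if m ∈ t then -1 else 1

lemma sg_abs (t : Finset ℕ) (m : ℕ) : |sg t m| ≤ 1 := by
  unfold sg
  split <;> simp

lemma sg_sq (t : Finset ℕ) (m : ℕ) : sg t m * sg t m = 1 := by
  unfold sg
  split <;> norm_num

lemma sign_orth (s : Finset ℕ) {m l : ℕ} (hm : m ∈ s) (hne : m ≠ l) :
    ∑ t ∈ s.powerset, sg t m * sg t l = 0 := by
  classical
  have hlm : l ≠ m := Ne.symm hne
  refine Finset.sum_involution (fun t _ => if m ∈ t then t.erase m else insert m t)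
    ?_ ?_ ?_ ?_
  · intro t ht
    beta_reduce
    by_cases hmt : m ∈ t
    · rw [if_pos hmt]
      have h1 : sg (t.erase m) m = 1 := by simp [sg, Finset.mem_erase]
      have h2 : sg (t.erase m) l = sg t l := by simp [sg, Finset.mem_erase, hlm]
      have h3 : sg t m = -1 := by simp [sg, hmt]
      rw [h1, h2, h3]
      ring
    · rw [if_neg hmt]
      have h1 : sg (insert m t) m = -1 := by simp [sg]
      have h2 : sg (insert m t) l = sg t l := by simp [sg, Finset.mem_insert, hlm]
      have h3 : sg t m = 1 := by simp [sg, hmt]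
      rw [h1, h2, h3]
      ring
  · intro t ht hf
    beta_reduce
    by_cases hmt : m ∈ t
    · rw [if_pos hmt]
      exact Finset.erase_ne_self.mpr hmt
    · rw [if_neg hmt]
      exact Finset.insert_ne_self.mpr hmt
  · intro t ht
    beta_reduce
    rw [Finset.mem_powerset] at ht ⊢
    by_cases hmt : m ∈ t
    · rw [if_pos hmt]
      exact (Finset.erase_subset m t).trans ht
    · rw [if_neg hmt]
      exact Finset.insert_subset hm ht
  · intro t ht
    beta_reduce
    by_cases hmt : m ∈ t
    · rw [if_pos hmt, if_neg (Finset.notMem_erase m t), Finset.insert_erase hmt]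
    · rw [if_neg hmt, if_pos (Finset.mem_insert_self m t), Finset.erase_insert hmt]

lemma sign_orth_diag (s : Finset ℕ) (m : ℕ) :
    ∑ t ∈ s.powerset, sg t m * sg t m = (2:ℝ) ^ s.card := by
  rw [Finset.sum_congr rfl (fun t _ => sg_sq t m), Finset.sum_const,
    Finset.card_powerset, nsmul_eq_mul]
  push_cast
  ring

lemma avg_bound (he : IsUnconditionalBasis e) (hlat : LatNorm e) (hone : ∀ j, ‖e j‖ = 1)
    (ha : ∀ n, HasSum (fun i => a n i • e i) (u n))
    (hdisj : Pairwise fun m n => Disjoint (Function.support (a m)) (Function.support (a n)))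
    (i₀ : ℕ → ℕ) (hi₀ : ∀ m, a m (i₀ m) ≠ 0)
    (P : X →L[ℝ] X) (hPrange : ∀ z, P z ∈ spanCl u)
    (K : ℝ) (hK0 : 0 ≤ K) (hK : ∀ z, ‖P z‖ ≤ K * ‖z‖)
    (s : Finset ℕ) (d : ℕ → ℝ) (v : ℕ → X) (wv : ℕ → ℕ → ℝ)
    (hv : ∀ n ∈ s, HasSum (fun i => wv n i • e i) (v n))
    (hdv : ∀ n ∈ s, ∀ m ∈ s, n ≠ m →
      Disjoint (Function.support (wv n)) (Function.support (wv m))) :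
    ‖∑ m ∈ s, (d m * ubar he hlat hone a i₀ m (P (v m))) • u m‖ ≤
      K * ‖∑ m ∈ s, d m • v m‖ := by
  classical
  set B : ℕ → ℕ → ℝ := fun m l => ubar he hlat hone a i₀ m (P (v l)) with hB
  set W : Finset ℕ → X := fun t => ∑ m ∈ s,
    (sg t m * ubar he hlat hone a i₀ m (P (∑ l ∈ s, (sg t l * d l) • v l))) • u m with hW
  have hznorm : ∀ t : Finset ℕ,
      ‖∑ l ∈ s, (sg t l * d l) • v l‖ ≤ ‖∑ l ∈ s, d l • v l‖ := by
    intro t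
    refine master_norm_le hlat (w := fun l i => d l * wv l i)
      (w' := fun l i => (sg t l * d l) * wv l i)
      (fun l hl => by simpa [smul_smul] using (hv l hl).const_smul (d l))
      (fun l hl => by simpa [smul_smul] using (hv l hl).const_smul (sg t l * d l))
      (fun n hn m hm hnm => Disjoint.mono ?_ ?_ (hdv n hn m hm hnm))
      (fun l _ i => ?_)
    · intro i hi
      simp only [Function.mem_support] at hi ⊢
      exact fun h0 => hi (by rw [h0, mul_zero])
    · intro i hi
      simp only [Function.mem_support] at hi ⊢
      exact fun h0 => hi (by rw [h0, mul_zero])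
    · rw [abs_mul, abs_mul, abs_mul]
      have h1 := sg_abs t l
      calc |sg t l| * |d l| * |wv l i| = |sg t l| * (|d l| * |wv l i|) := by ring
        _ ≤ 1 * (|d l| * |wv l i|) :=
          mul_le_mul_of_nonneg_right h1 (mul_nonneg (abs_nonneg _) (abs_nonneg _))
        _ = |d l| * |wv l i| := one_mul _
  have hWb : ∀ t : Finset ℕ, ‖W t‖ ≤ K * ‖∑ l ∈ s, d l • v l‖ := by
    intro t
    have h1 := span_ineq he hlat hone ha hdisj i₀ hi₀ s (sg t) (fun m => sg_abs t m)
      (hPrange (∑ l ∈ s, (sg t l * d l) • v l))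
    calc ‖W t‖ ≤ ‖P (∑ l ∈ s, (sg t l * d l) • v l)‖ := h1
      _ ≤ K * ‖∑ l ∈ s, (sg t l * d l) • v l‖ := hK _
      _ ≤ K * ‖∑ l ∈ s, d l • v l‖ := mul_le_mul_of_nonneg_left (hznorm t) hK0
  have hexp : ∀ (t : Finset ℕ) (m : ℕ),
      ubar he hlat hone a i₀ m (P (∑ l ∈ s, (sg t l * d l) • v l)) =
        ∑ l ∈ s, (sg t l * d l) * B m l := by
    intro t m
    simp only [map_sum, map_smul, smul_eq_mul, hB]
  have hkey : ∑ t ∈ s.powerset, W t =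
      ((2:ℝ) ^ s.card) • ∑ m ∈ s, (d m * B m m) • u m := by
    have e1 : ∑ t ∈ s.powerset, W t = ∑ m ∈ s,
        (∑ t ∈ s.powerset, ∑ l ∈ s, (sg t m * sg t l) * (d l * B m l)) • u m := by
      rw [hW, Finset.sum_comm]
      refine Finset.sum_congr rfl fun m _ => ?_
      rw [← Finset.sum_smul]
      congr 1
      refine Finset.sum_congr rfl fun t _ => ?_
      rw [hexp t m, Finset.mul_sum]
      exact Finset.sum_congr rfl fun l _ => by ring
    rw [e1, Finset.smul_sum]
    refine Finset.sum_congr rfl fun m hm => ?_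
    have e2 : ∑ t ∈ s.powerset, ∑ l ∈ s, (sg t m * sg t l) * (d l * B m l) =
        (2:ℝ) ^ s.card * (d m * B m m) := by
      rw [Finset.sum_comm]
      rw [Finset.sum_eq_single_of_mem m hm (fun l _ hne => by
        rw [← Finset.sum_mul, sign_orth s hm (Ne.symm hne), zero_mul])]
      rw [← Finset.sum_mul, sign_orth_diag]
    rw [e2, mul_smul]
  have hT : ((2:ℝ) ^ s.card) * ‖∑ m ∈ s, (d m * B m m) • u m‖ ≤
      ((2:ℝ) ^ s.card) * (K * ‖∑ l ∈ s, d l • v l‖) := by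
    calc ((2:ℝ) ^ s.card) * ‖∑ m ∈ s, (d m * B m m) • u m‖
        = ‖((2:ℝ) ^ s.card) • ∑ m ∈ s, (d m * B m m) • u m‖ := by
          rw [norm_smul, Real.norm_eq_abs, abs_of_pos (pow_pos two_pos _)]
      _ = ‖∑ t ∈ s.powerset, W t‖ := by rw [hkey]
      _ ≤ ∑ t ∈ s.powerset, ‖W t‖ := norm_sum_le _ _
      _ ≤ ∑ t ∈ s.powerset, K * ‖∑ l ∈ s, d l • v l‖ :=
          Finset.sum_le_sum fun t _ => hWb t
      _ = ((2:ℝ) ^ s.card) * (K * ‖∑ l ∈ s, d l • v l‖) := by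
          rw [Finset.sum_const, Finset.card_powerset, nsmul_eq_mul]
          push_cast
          ring
  exact le_of_mul_le_mul_left hT (pow_pos two_pos _)

lemma supp_subset_of_dom {w : ℕ → ℝ} {b : ℕ → ℝ} (h : ∀ i, |w i| ≤ |b i|) :
    Function.support w ⊆ Function.support b := by
  intro i hi
  simp only [Function.mem_support] at hi ⊢
  intro h0
  apply hi
  have := h i
  rw [h0, abs_zero] at this
  exact abs_eq_zero.mp (le_antisymm this (abs_nonneg _))

lemma sum_ite_subset {t s : Finset ℕ} (hts : t ⊆ s) (c : ℕ → ℝ) (f : ℕ → X) :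
    ∑ n ∈ t, c n • f n = ∑ n ∈ s, (if n ∈ t then c n else 0) • f n := by
  have h2 := Finset.sum_subset (f := fun n => (if n ∈ t then c n else 0) • f n) hts
    (fun n _ hnt => by beta_reduce; rw [if_neg hnt, zero_smul])
  beta_reduce at h2
  rw [← h2]
  exact Finset.sum_congr rfl fun n hn => by rw [if_pos hn]

lemma subset_norm_le_u (hlat : LatNorm e) (ha : ∀ n, HasSum (fun i => a n i • e i) (u n))
    (hdisj : Pairwise fun m n => Disjoint (Function.support (a m)) (Function.support (a n)))
    {t s : Finset ℕ} (hts : t ⊆ s) (c : ℕ → ℝ) :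
    ‖∑ n ∈ t, c n • u n‖ ≤ ‖∑ n ∈ s, c n • u n‖ := by
  rw [sum_ite_subset hts c u]
  exact comb_norm_le hlat ha hdisj s _ c
    (fun n _ => by split <;> simp [le_refl, abs_nonneg])

lemma e_comb_norm_le (hlat : LatNorm e) (κ : ℕ → ℕ) (hκ : ∀ n m, n ≠ m → κ n ≠ κ m)
    (t : Finset ℕ) (g h : ℕ → ℝ) (hgh : ∀ n ∈ t, |g n| ≤ |h n|) :
    ‖∑ n ∈ t, g n • e (κ n)‖ ≤ ‖∑ n ∈ t, h n • e (κ n)‖ := by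
  refine master_norm_le hlat (w := fun n i => if i = κ n then h n else 0)
    (w' := fun n i => if i = κ n then g n else 0)
    (fun n _ => hasSum_single_vec e (κ n) (h n))
    (fun n _ => hasSum_single_vec e (κ n) (g n))
    (fun n _ m _ hnm => Set.disjoint_left.mpr ?_)
    (fun n hn i => by
      show |if i = κ n then g n else 0| ≤ |if i = κ n then h n else 0|
      by_cases hi : i = κ n
      · rw [if_pos hi, if_pos hi]
        exact hgh n hn
      · rw [if_neg hi, if_neg hi, abs_zero])
  intro i hi hi2
  simp only [Function.mem_support, ne_eq, ite_eq_right_iff, not_forall] at hi hi2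
  exact hκ n m hnm (by rw [← hi.1, ← hi2.1])

lemma subset_norm_le_e (hlat : LatNorm e) (κ : ℕ → ℕ) (hκ : ∀ n m, n ≠ m → κ n ≠ κ m)
    {t s : Finset ℕ} (hts : t ⊆ s) (c : ℕ → ℝ) :
    ‖∑ n ∈ t, c n • e (κ n)‖ ≤ ‖∑ n ∈ s, c n • e (κ n)‖ := by
  rw [sum_ite_subset hts c (fun n => e (κ n))]
  exact e_comb_norm_le hlat κ hκ s _ c
    (fun n _ => by split <;> simp [le_refl, abs_nonneg])

lemma sum_mul_smul (r : ℝ) (t : Finset ℕ) (c : ℕ → ℝ) (f : ℕ → X) :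
    ∑ n ∈ t, (r * c n) • f n = r • ∑ n ∈ t, c n • f n := by
  rw [Finset.smul_sum]
  exact Finset.sum_congr rfl fun n _ => by rw [mul_smul]

lemma main_estimates
    (he : IsUnconditionalBasis e) (hlat : LatNorm e) (hone : ∀ j, ‖e j‖ = 1)
    (ha : ∀ n, HasSum (fun i => a n i • e i) (u n)) (hnorm : ∀ n, ‖u n‖ = 1)
    (hdisj : Pairwise fun m n => Disjoint (Function.support (a m)) (Function.support (a n)))
    (i₀ : ℕ → ℕ) (hi₀ : ∀ m, a m (i₀ m) ≠ 0)
    (P : X →L[ℝ] X) (hPrange : ∀ z, P z ∈ spanCl u)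
    (K : ℝ) (hK1 : 1 ≤ K) (hK : ∀ z, ‖P z‖ ≤ K * ‖z‖)
    {γ : ℝ} (hγ1 : 1 ≤ γ)
    (R : ℕ → ℕ → Prop)
    (hkey : ∀ (m : ℕ) (U V : Fin m → ℕ → ℝ),
      (∀ k, (Function.support (U k)).Finite) → (∀ k, (Function.support (V k)).Finite) →
      (Pairwise fun k l => Disjoint (Function.support (U k)) (Function.support (U l))) →
      (Pairwise fun k l => Disjoint (Function.support (V k)) (Function.support (V l))) →
      (∀ k, ∀ i ∈ Function.support (U k), ∀ j ∈ Function.support (V k), R i j) →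
      (∀ k, ‖vecSum e (V k)‖ ≤ ‖vecSum e (U k)‖) →
      ‖vecSum e (fun i => ∑ k, V k i)‖ ≤ γ * ‖vecSum e (fun i => ∑ k, U k i)‖)
    (κ : ℕ → ℕ) (hκinj : ∀ n m, n ≠ m → κ n ≠ κ m)
    (S1 : ℕ → Prop)
    (hS1a : ∀ n, S1 n → 1 ≤ 4 * K * |a n (κ n)|)
    (hS1b : ∀ n, S1 n → 1/4 ≤ |ubar he hlat hone a i₀ n (P (e (κ n)))|)
    (N F : ℕ → X) (wN wF : ℕ → ℕ → ℝ)
    (hNsum : ∀ n, HasSum (fun i => wN n i • e i) (N n))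
    (hFsum : ∀ n, HasSum (fun i => wF n i • e i) (F n))
    (hNdom : ∀ n i, |wN n i| ≤ |a n i|)
    (hFdom : ∀ n i, |wF n i| ≤ |a n i|)
    (hordN : ∀ n, ∀ i ∈ Function.support (wN n), R i (κ n))
    (hordF : ∀ n, ∀ j ∈ Function.support (wF n), R (κ n) j)
    (hS2N : ∀ n, ¬ S1 n → 1/4 ≤ ubar he hlat hone a i₀ n (P (N n)))
    (hS2F : ∀ n, ¬ S1 n → 1/4 ≤ ubar he hlat hone a i₀ n (P (F n)))
    (c : ℕ → ℝ) (s : Finset ℕ) :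
    ‖∑ n ∈ s, c n • e (κ n)‖ ≤ (4 * K * (1 + γ)) * ‖∑ n ∈ s, c n • u n‖ ∧
      ‖∑ n ∈ s, c n • u n‖ ≤ (4 * K * (1 + γ)) * ‖∑ n ∈ s, c n • e (κ n)‖ := by
  classical
  have hK0 : (0:ℝ) < K := lt_of_lt_of_le one_pos hK1
  have hγ0 : (0:ℝ) ≤ γ := le_trans zero_le_one hγ1
  have hub_le : ∀ (n : ℕ) (z : X), |ubar he hlat hone a i₀ n (P z)| ≤ K * ‖z‖ := by
    intro n z
    exact le_trans (ubar_le_norm he hlat hone ha hnorm hdisj i₀ hi₀ n (hPrange z)) (hK z)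
  have hNle : ∀ n, ‖N n‖ ≤ 1 := by
    intro n
    have := norm_le_of_dom hlat (hNsum n) (ha n) (hNdom n)
    rwa [hnorm n] at this
  have hFle : ∀ n, ‖F n‖ ≤ 1 := by
    intro n
    have := norm_le_of_dom hlat (hFsum n) (ha n) (hFdom n)
    rwa [hnorm n] at this
  have hNge : ∀ n, ¬ S1 n → 1 ≤ 4 * K * ‖N n‖ := by
    intro n hn
    have h1 := hS2N n hn
    have h2 : ubar he hlat hone a i₀ n (P (N n)) ≤ K * ‖N n‖ :=
      le_trans (le_abs_self _) (hub_le n (N n))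
    nlinarith
  have hsuppN : ∀ n, Function.support (wN n) ⊆ Function.support (a n) :=
    fun n => supp_subset_of_dom (hNdom n)
  have hsuppF : ∀ n, Function.support (wF n) ⊆ Function.support (a n) :=
    fun n => supp_subset_of_dom (hFdom n)
  set s1 := s.filter S1 with hs1
  set s2 := s.filter (fun n => ¬ S1 n) with hs2
  have hs1sub : s1 ⊆ s := Finset.filter_subset _ _
  have hs2sub : s2 ⊆ s := Finset.filter_subset _ _
  have hsplitE : ∑ n ∈ s, c n • e (κ n) =
      ∑ n ∈ s1, c n • e (κ n) + ∑ n ∈ s2, c n • e (κ n) :=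
    (Finset.sum_filter_add_sum_filter_not s S1 _).symm
  have hsplitU : ∑ n ∈ s, c n • u n = ∑ n ∈ s1, c n • u n + ∑ n ∈ s2, c n • u n :=
    (Finset.sum_filter_add_sum_filter_not s S1 _).symm
  -- EASY DIRECTION, s1 part
  have easy1 : ‖∑ n ∈ s1, c n • e (κ n)‖ ≤ 4 * K * ‖∑ n ∈ s, c n • u n‖ := by
    have step1 : ‖∑ n ∈ s1, c n • e (κ n)‖ ≤ ‖∑ n ∈ s1, (4 * K * c n) • u n‖ := by
      refine master_norm_le hlat (w := fun n i => (4 * K * c n) * a n i)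
        (w' := fun n i => if i = κ n then c n else 0)
        (fun n _ => by simpa [smul_smul] using (ha n).const_smul (4 * K * c n))
        (fun n _ => hasSum_single_vec e (κ n) (c n))
        (fun n _ m _ hnm => Disjoint.mono ?_ ?_ (hdisj hnm))
        (fun n hn i => ?_)
      · intro i hi
        simp only [Function.mem_support] at hi ⊢
        exact fun h0 => hi (by rw [h0, mul_zero])
      · intro i hi
        simp only [Function.mem_support] at hi ⊢
        exact fun h0 => hi (by rw [h0, mul_zero])
      · have hS1n : S1 n := (Finset.mem_filter.mp hn).2
        show |if i = κ n then c n else 0| ≤ |(4 * K * c n) * a n i|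
        by_cases hi : i = κ n
        · rw [if_pos hi, hi, abs_mul, abs_mul, abs_mul,
            (by norm_num : |(4:ℝ)| = 4), abs_of_pos hK0]
          have h1 := hS1a n hS1n
          nlinarith [abs_nonneg (c n), abs_nonneg (a n (κ n))]
        · rw [if_neg hi, abs_zero]
          exact abs_nonneg _
    have step2 : ∑ n ∈ s1, (4 * K * c n) • u n = (4 * K) • ∑ n ∈ s1, c n • u n := by
      rw [← sum_mul_smul]
    calc ‖∑ n ∈ s1, c n • e (κ n)‖ ≤ ‖∑ n ∈ s1, (4 * K * c n) • u n‖ := step1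
      _ = (4 * K) * ‖∑ n ∈ s1, c n • u n‖ := by
          rw [step2, norm_smul, Real.norm_eq_abs,
            abs_of_pos (by linarith : (0:ℝ) < 4 * K)]
      _ ≤ 4 * K * ‖∑ n ∈ s, c n • u n‖ := by
          have h1 := subset_norm_le_u hlat ha hdisj hs1sub c
          nlinarith
  -- EASY DIRECTION, s2 part
  have easy2 : ‖∑ n ∈ s2, c n • e (κ n)‖ ≤ γ * (4 * K * ‖∑ n ∈ s, c n • u n‖) := by
    have step1 : ‖∑ n ∈ s2, c n • e (κ n)‖ ≤ γ * ‖∑ n ∈ s2, (4 * K * c n) • N n‖ := by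
      refine extCore hγ0 hlat R hkey s2 (fun n => (4 * K * c n) • N n)
        (fun n => c n • e (κ n)) (fun n i => (4 * K * c n) * wN n i)
        (fun n i => if i = κ n then c n else 0)
        (fun n _ => by simpa [smul_smul] using (hNsum n).const_smul (4 * K * c n))
        (fun n _ => hasSum_single_vec e (κ n) (c n))
        (fun n hn m hm hnm => Disjoint.mono ?_ ?_ (hdisj hnm))
        (fun n hn m hm hnm => Set.disjoint_left.mpr ?_)
        (fun n hn i hi j hj => ?_) (fun n hn => ?_)
      · exact fun i hi => hsuppN n (by
          simp only [Function.mem_support] at hi ⊢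
          exact fun h0 => hi (by rw [h0, mul_zero]))
      · exact fun i hi => hsuppN m (by
          simp only [Function.mem_support] at hi ⊢
          exact fun h0 => hi (by rw [h0, mul_zero]))
      · intro i1 hi1 hi2
        simp only [Function.mem_support, ne_eq, ite_eq_right_iff, not_forall] at hi1 hi2
        exact hκinj n m hnm (by rw [← hi1.1, ← hi2.1])
      · have hiN : i ∈ Function.support (wN n) := by
          simp only [Function.mem_support] at hi ⊢
          exact fun h0 => hi (by rw [h0, mul_zero])
        have hjκ : j = κ n := by
          simp only [Function.mem_support, ne_eq, ite_eq_right_iff, not_forall] at hj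
          exact hj.1
        rw [hjκ]
        exact hordN n i hiN
      · have hS2n : ¬ S1 n := (Finset.mem_filter.mp hn).2
        rw [norm_smul, norm_smul, Real.norm_eq_abs, Real.norm_eq_abs, hone (κ n), mul_one,
          abs_mul, abs_mul, (by norm_num : |(4:ℝ)| = 4), abs_of_pos hK0]
        have h1 := hNge n hS2n
        nlinarith [abs_nonneg (c n), norm_nonneg (N n)]
    have step2 : ‖∑ n ∈ s2, (4 * K * c n) • N n‖ ≤ 4 * K * ‖∑ n ∈ s, c n • u n‖ := by
      have e2 : ∑ n ∈ s2, (4 * K * c n) • N n = (4 * K) • ∑ n ∈ s2, c n • N n := by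
        rw [← sum_mul_smul]
      rw [e2, norm_smul, Real.norm_eq_abs, abs_of_pos (by linarith : (0:ℝ) < 4 * K)]
      have e3 : ‖∑ n ∈ s2, c n • N n‖ ≤ ‖∑ n ∈ s2, c n • u n‖ := by
        refine master_norm_le hlat (w := fun n i => c n * a n i)
          (w' := fun n i => c n * wN n i)
          (fun n _ => by simpa [smul_smul] using (ha n).const_smul (c n))
          (fun n _ => by simpa [smul_smul] using (hNsum n).const_smul (c n))
          (fun n _ m _ hnm => Disjoint.mono ?_ ?_ (hdisj hnm))
          (fun n _ i => ?_)
        · intro i hi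
          simp only [Function.mem_support] at hi ⊢
          exact fun h0 => hi (by rw [h0, mul_zero])
        · intro i hi
          simp only [Function.mem_support] at hi ⊢
          exact fun h0 => hi (by rw [h0, mul_zero])
        · show |c n * wN n i| ≤ |c n * a n i|
          rw [abs_mul, abs_mul]
          exact mul_le_mul_of_nonneg_left (hNdom n i) (abs_nonneg _)
      have e4 := subset_norm_le_u hlat ha hdisj hs2sub c
      nlinarith
    calc ‖∑ n ∈ s2, c n • e (κ n)‖ ≤ γ * ‖∑ n ∈ s2, (4 * K * c n) • N n‖ := step1
      _ ≤ γ * (4 * K * ‖∑ n ∈ s, c n • u n‖) := mul_le_mul_of_nonneg_left step2 hγ0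
  -- HARD DIRECTION, s1 part
  have hard1 : ‖∑ n ∈ s1, c n • u n‖ ≤
      K * (4 * ‖∑ n ∈ s, c n • e (κ n)‖) := by
    have hBne : ∀ m, S1 m → ubar he hlat hone a i₀ m (P (e (κ m))) ≠ 0 := by
      intro m hm h0
      have h1 := hS1b m hm
      rw [h0, abs_zero] at h1
      linarith
    have havg := avg_bound he hlat hone ha hdisj i₀ hi₀ P hPrange K (le_of_lt hK0) hK
      s1 (fun n => c n / ubar he hlat hone a i₀ n (P (e (κ n))))
      (fun m => e (κ m)) (fun m i => if i = κ m then 1 else 0)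
      (fun m _ => by simpa using hasSum_single_vec e (κ m) 1)
      (fun n hn m hm hnm => Set.disjoint_left.mpr (by
        intro i1 hi1 hi2
        simp only [Function.mem_support, ne_eq, ite_eq_right_iff, not_forall] at hi1 hi2
        exact hκinj n m hnm (by rw [← hi1.1, ← hi2.1])))
    have hLHS : ∑ m ∈ s1,
        ((c m / ubar he hlat hone a i₀ m (P (e (κ m)))) *
          ubar he hlat hone a i₀ m (P (e (κ m)))) • u m = ∑ m ∈ s1, c m • u m := by
      refine Finset.sum_congr rfl fun m hm => ?_
      have hS1m : S1 m := (Finset.mem_filter.mp hm).2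
      rw [div_mul_cancel₀ _ (hBne m hS1m)]
    rw [hLHS] at havg
    have hRHS : ‖∑ m ∈ s1, (c m / ubar he hlat hone a i₀ m (P (e (κ m)))) • e (κ m)‖ ≤
        4 * ‖∑ n ∈ s, c n • e (κ n)‖ := by
      have e1 : ‖∑ m ∈ s1, (c m / ubar he hlat hone a i₀ m (P (e (κ m)))) • e (κ m)‖ ≤
          ‖∑ m ∈ s1, (4 * c m) • e (κ m)‖ := by
        refine e_comb_norm_le hlat κ hκinj s1 _ (fun m => 4 * c m) fun m hm => ?_
        have hS1m : S1 m := (Finset.mem_filter.mp hm).2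
        have h1 := hS1b m hS1m
        rw [abs_div, abs_mul, (by norm_num : |(4:ℝ)| = 4)]
        rw [div_le_iff₀ (by linarith)]
        nlinarith [abs_nonneg (c m)]
      have e2 : ‖∑ m ∈ s1, (4 * c m) • e (κ m)‖ = 4 * ‖∑ m ∈ s1, c m • e (κ m)‖ := by
        rw [sum_mul_smul, norm_smul, Real.norm_eq_abs, (by norm_num : |(4:ℝ)| = 4)]
      have e3 := subset_norm_le_e hlat κ hκinj hs1sub c
      calc ‖∑ m ∈ s1, (c m / ubar he hlat hone a i₀ m (P (e (κ m)))) • e (κ m)‖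
          ≤ ‖∑ m ∈ s1, (4 * c m) • e (κ m)‖ := e1
        _ = 4 * ‖∑ m ∈ s1, c m • e (κ m)‖ := e2
        _ ≤ 4 * ‖∑ n ∈ s, c n • e (κ n)‖ := by nlinarith
    calc ‖∑ n ∈ s1, c n • u n‖
        ≤ K * ‖∑ m ∈ s1, (c m / ubar he hlat hone a i₀ m (P (e (κ m)))) • e (κ m)‖ := havg
      _ ≤ K * (4 * ‖∑ n ∈ s, c n • e (κ n)‖) :=
          mul_le_mul_of_nonneg_left hRHS (le_of_lt hK0)
  -- HARD DIRECTION, s2 part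
  have hard2 : ‖∑ n ∈ s2, c n • u n‖ ≤
      4 * (K * (γ * ‖∑ n ∈ s, c n • e (κ n)‖)) := by
    have step1 : ‖∑ n ∈ s2, c n • u n‖ ≤
        4 * ‖∑ n ∈ s2, (c n * ubar he hlat hone a i₀ n (P (F n))) • u n‖ := by
      have e1 : ‖∑ n ∈ s2, c n • u n‖ ≤
          ‖∑ n ∈ s2, (4 * (c n * ubar he hlat hone a i₀ n (P (F n)))) • u n‖ := by
        refine comb_norm_le hlat ha hdisj s2 c
          (fun n => 4 * (c n * ubar he hlat hone a i₀ n (P (F n)))) fun n hn => ?_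
        have hS2n : ¬ S1 n := (Finset.mem_filter.mp hn).2
        have h1 := hS2F n hS2n
        show |c n| ≤ |4 * (c n * ubar he hlat hone a i₀ n (P (F n)))|
        rw [abs_mul, abs_mul, (by norm_num : |(4:ℝ)| = 4),
          abs_of_pos (by linarith : (0:ℝ) < ubar he hlat hone a i₀ n (P (F n)))]
        nlinarith [abs_nonneg (c n)]
      have e2 : ∑ n ∈ s2, (4 * (c n * ubar he hlat hone a i₀ n (P (F n)))) • u n =
          (4:ℝ) • ∑ n ∈ s2, (c n * ubar he hlat hone a i₀ n (P (F n))) • u n := by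
        rw [← sum_mul_smul]
      rw [e2, norm_smul, Real.norm_eq_abs, (by norm_num : |(4:ℝ)| = 4)] at e1
      exact e1
    have step2 : ‖∑ n ∈ s2, (c n * ubar he hlat hone a i₀ n (P (F n))) • u n‖ ≤
        K * ‖∑ n ∈ s2, c n • F n‖ :=
      avg_bound he hlat hone ha hdisj i₀ hi₀ P hPrange K (le_of_lt hK0) hK
        s2 c F wF (fun n _ => hFsum n)
        (fun n _ m _ hnm => Disjoint.mono (hsuppF n) (hsuppF m) (hdisj hnm))
    have step3 : ‖∑ n ∈ s2, c n • F n‖ ≤ γ * ‖∑ n ∈ s2, c n • e (κ n)‖ := by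
      refine extCore hγ0 hlat R hkey s2 (fun n => c n • e (κ n)) (fun n => c n • F n)
        (fun n i => if i = κ n then c n else 0) (fun n i => c n * wF n i)
        (fun n _ => hasSum_single_vec e (κ n) (c n))
        (fun n _ => by simpa [smul_smul] using (hFsum n).const_smul (c n))
        (fun n hn m hm hnm => Set.disjoint_left.mpr (by
          intro i1 hi1 hi2
          simp only [Function.mem_support, ne_eq, ite_eq_right_iff, not_forall] at hi1 hi2
          exact hκinj n m hnm (by rw [← hi1.1, ← hi2.1])))
        (fun n hn m hm hnm => Disjoint.mono ?_ ?_ (hdisj hnm))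
        (fun n hn i hi j hj => ?_) (fun n hn => ?_)
      · exact fun i hi => hsuppF n (by
          simp only [Function.mem_support] at hi ⊢
          exact fun h0 => hi (by rw [h0, mul_zero]))
      · exact fun i hi => hsuppF m (by
          simp only [Function.mem_support] at hi ⊢
          exact fun h0 => hi (by rw [h0, mul_zero]))
      · have hiκ : i = κ n := by
          simp only [Function.mem_support, ne_eq, ite_eq_right_iff, not_forall] at hi
          exact hi.1
        have hjF : j ∈ Function.support (wF n) := by
          simp only [Function.mem_support] at hj ⊢
          exact fun h0 => hj (by rw [h0, mul_zero])
        rw [hiκ]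
        exact hordF n j hjF
      · rw [norm_smul, norm_smul, Real.norm_eq_abs, hone (κ n), mul_one]
        nlinarith [hFle n, abs_nonneg (c n), norm_nonneg (F n)]
    calc ‖∑ n ∈ s2, c n • u n‖
        ≤ 4 * ‖∑ n ∈ s2, (c n * ubar he hlat hone a i₀ n (P (F n))) • u n‖ := step1
      _ ≤ 4 * (K * ‖∑ n ∈ s2, c n • F n‖) := by nlinarith
      _ ≤ 4 * (K * (γ * ‖∑ n ∈ s2, c n • e (κ n)‖)) := by nlinarith [mul_le_mul_of_nonneg_left step3 (le_of_lt hK0)]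
      _ ≤ 4 * (K * (γ * ‖∑ n ∈ s, c n • e (κ n)‖)) := by
          nlinarith [subset_norm_le_e hlat κ hκinj hs2sub c,
            mul_le_mul_of_nonneg_left (mul_le_mul_of_nonneg_left
              (subset_norm_le_e hlat κ hκinj hs2sub c) hγ0) (le_of_lt hK0)]
  constructor
  · rw [hsplitE]
    refine le_trans (norm_add_le _ _) ?_
    have hfin : 4 * K * ‖∑ n ∈ s, c n • u n‖ +
        γ * (4 * K * ‖∑ n ∈ s, c n • u n‖) =
        (4 * K * (1 + γ)) * ‖∑ n ∈ s, c n • u n‖ := by ring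
    linarith [add_le_add easy1 easy2]
  · rw [hsplitU]
    refine le_trans (norm_add_le _ _) ?_
    have hfin : K * (4 * ‖∑ n ∈ s, c n • e (κ n)‖) +
        4 * (K * (γ * ‖∑ n ∈ s, c n • e (κ n)‖)) =
        (4 * K * (1 + γ)) * ‖∑ n ∈ s, c n • e (κ n)‖ := by ring
    linarith [add_le_add hard1 hard2]

lemma per_n (he : IsUnconditionalBasis e) (hlat : LatNorm e) (hone : ∀ j, ‖e j‖ = 1)
    (ha : ∀ n, HasSum (fun i => a n i • e i) (u n)) (hnorm : ∀ n, ‖u n‖ = 1)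
    (hdisj : Pairwise fun m n => Disjoint (Function.support (a m)) (Function.support (a n)))
    (i₀ : ℕ → ℕ) (hi₀ : ∀ m, a m (i₀ m) ≠ 0)
    (P : X →L[ℝ] X) (hPrange : ∀ z, P z ∈ spanCl u) (hPfix : ∀ y ∈ spanCl u, P y = y)
    (K : ℝ) (hK1 : 1 ≤ K) (hK : ∀ z, ‖P z‖ ≤ K * ‖z‖) (n : ℕ) :
    ∃ (kn : ℕ) (Nn Fn : X) (wNn wFn : ℕ → ℝ),
      a n kn ≠ 0 ∧
      ((∃ i, (1/4:ℝ) ≤ |a n i * ubar he hlat hone a i₀ n (P (e i))|) →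
        (1 ≤ 4 * K * |a n kn| ∧ 1/4 ≤ |ubar he hlat hone a i₀ n (P (e kn))|)) ∧
      HasSum (fun i => wNn i • e i) Nn ∧ HasSum (fun i => wFn i • e i) Fn ∧
      (∀ i, |wNn i| ≤ |a n i|) ∧ (∀ i, |wFn i| ≤ |a n i|) ∧
      (∀ i ∈ Function.support wNn, i < kn) ∧ (∀ j ∈ Function.support wFn, kn < j) ∧
      (¬ (∃ i, (1/4:ℝ) ≤ |a n i * ubar he hlat hone a i₀ n (P (e i))|) →
        (1/4 ≤ ubar he hlat hone a i₀ n (P Nn) ∧ 1/4 ≤ ubar he hlat hone a i₀ n (P Fn))) := by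
  classical
  have hK0 : (0:ℝ) < K := lt_of_lt_of_le one_pos hK1
  have hbK : ∀ i, |ubar he hlat hone a i₀ n (P (e i))| ≤ K := by
    intro i
    calc |ubar he hlat hone a i₀ n (P (e i))|
        ≤ ‖P (e i)‖ := ubar_le_norm he hlat hone ha hnorm hdisj i₀ hi₀ n (hPrange (e i))
      _ ≤ K * ‖e i‖ := hK _
      _ = K := by rw [hone i, mul_one]
  have haone : ∀ i, |a n i| ≤ 1 := by
    intro i
    have h1 := norm_le_of_dom hlat (hasSum_single_vec e i (a n i)) (ha n)
      (fun j => by by_cases hj : j = i <;> simp [hj])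
    rw [hnorm n, norm_smul, Real.norm_eq_abs, hone i, mul_one] at h1
    exact h1
  have hpairn : HasSum (fun i => a n i * ubar he hlat hone a i₀ n (P (e i))) 1 := by
    have h1 := ((ubar he hlat hone a i₀ n).comp P).hasSum (ha n)
    have h2 : (fun i => ((ubar he hlat hone a i₀ n).comp P) (a n i • e i)) =
        fun i => a n i * ubar he hlat hone a i₀ n (P (e i)) := by
      funext i
      rw [ContinuousLinearMap.comp_apply, map_smul, map_smul, smul_eq_mul]
    have h3 : ((ubar he hlat hone a i₀ n).comp P) (u n) = 1 := by
      rw [ContinuousLinearMap.comp_apply, hPfix _ (u_mem_spanCl n)]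
      have h4 : u n = ∑ l ∈ ({n} : Finset ℕ), (fun _ => (1:ℝ)) l • u l := by simp
      rw [h4, ubar_comb he hlat hone ha hdisj i₀ hi₀ n {n} (fun _ => 1)]
      simp
    rw [h2, h3] at h1
    exact h1
  set q : ℕ → ℝ := fun i => |a n i * ubar he hlat hone a i₀ n (P (e i))| with hq
  have hqsum : Summable q := hpairn.summable.abs
  have hσ : 1 ≤ ∑' i, q i := by
    have h1 : |∑' i, a n i * ubar he hlat hone a i₀ n (P (e i))| ≤ ∑' i, q i := by
      have h2 := norm_tsum_le_tsum_norm
        (f := fun i => a n i * ubar he hlat hone a i₀ n (P (e i)))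
        (by simp only [Real.norm_eq_abs]; exact hqsum)
      simp only [Real.norm_eq_abs] at h2
      exact h2
    rw [hpairn.tsum_eq] at h1
    simpa using h1
  by_cases hS1 : ∃ i, (1/4:ℝ) ≤ q i
  · obtain ⟨i1, hi1⟩ := hS1
    have h2 : (1/4:ℝ) ≤ |a n i1| * |ubar he hlat hone a i₀ n (P (e i1))| := by
      rw [← abs_mul]
      exact hi1
    have hai1 : a n i1 ≠ 0 := by
      intro h0
      rw [h0, abs_zero, zero_mul] at h2
      linarith
    refine ⟨i1, 0, 0, 0, 0, hai1, fun _ => ⟨?_, ?_⟩,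
      by simpa using (hasSum_zero : HasSum (fun _ : ℕ => (0:X)) 0),
      by simpa using (hasSum_zero : HasSum (fun _ : ℕ => (0:X)) 0),
      fun i => by simp, fun i => by simp,
      fun i hi => by simp at hi, fun j hj => by simp at hj,
      fun hc => absurd ⟨i1, hi1⟩ hc⟩
    · have h1 := hbK i1
      nlinarith [abs_nonneg (a n i1), abs_nonneg (ubar he hlat hone a i₀ n (P (e i1)))]
    · have h1 := haone i1
      nlinarith [abs_nonneg (a n i1), abs_nonneg (ubar he hlat hone a i₀ n (P (e i1)))]
  · have hS1' : ∀ i, q i < 1/4 := by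
      intro i
      by_contra hcon
      exact hS1 ⟨i, le_of_not_gt hcon⟩
    have hmed : ∃ m, (1/2:ℝ) ≤ ∑ i ∈ Finset.range (m+1), q i := by
      have h1 := hqsum.hasSum.tendsto_sum_nat
      have h2 : (1/2:ℝ) < ∑' i, q i := lt_of_lt_of_le (by norm_num) hσ
      obtain ⟨m, hm⟩ := (h1.eventually (eventually_gt_nhds h2)).exists
      rcases m with _ | m'
      · simp only [Finset.range_zero, Finset.sum_empty] at hm
        norm_num at hm
      · exact ⟨m', le_of_lt hm⟩
    set kn := Nat.find hmed with hkn
    have hfind : (1/2:ℝ) ≤ ∑ i ∈ Finset.range (kn+1), q i := Nat.find_spec hmed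
    have hmin : ∑ i ∈ Finset.range kn, q i < 1/2 := by
      rcases Nat.eq_zero_or_pos kn with h0 | hpos
      · rw [h0]
        simp only [Finset.range_zero, Finset.sum_empty]
        norm_num
      · have h1 := Nat.find_min hmed (m := kn - 1) (by omega)
        push_neg at h1
        have h2 : kn - 1 + 1 = kn := by omega
        rwa [h2] at h1
    have hqkn : q kn < 1/4 := hS1' kn
    have hsucc := Finset.sum_range_succ q kn
    have hqkn_pos : 0 < q kn := by nlinarith
    have hank : a n kn ≠ 0 := by
      intro h0
      rw [hq] at hqkn_pos
      simp only [h0, zero_mul, abs_zero] at hqkn_pos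
      exact lt_irrefl _ hqkn_pos
    set θ : ℕ → ℝ := fun i =>
      if a n i * ubar he hlat hone a i₀ n (P (e i)) < 0 then -1 else 1 with hθdef
    have hθmul : ∀ i, θ i * (a n i * ubar he hlat hone a i₀ n (P (e i))) = q i := by
      intro i
      rw [hθdef, hq]
      beta_reduce
      split
      · rw [abs_of_neg (by assumption)]
        ring
      · rw [abs_of_nonneg (le_of_not_gt (by assumption))]
        ring
    have hθa : ∀ i, |θ i * a n i| ≤ |a n i| := by
      intro i
      rw [abs_mul, hθdef]
      beta_reduce
      split <;> simp
    set wNn : ℕ → ℝ := fun i => if i < kn then θ i * a n i else 0 with hwN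
    set wFn : ℕ → ℝ := fun i => if kn < i then θ i * a n i else 0 with hwF
    have hdomN : ∀ i, |wNn i| ≤ |a n i| := by
      intro i
      rw [hwN]
      beta_reduce
      split
      · exact hθa i
      · simp
    have hdomF : ∀ i, |wFn i| ≤ |a n i| := by
      intro i
      rw [hwF]
      beta_reduce
      split
      · exact hθa i
      · simp
    have hsumN : Summable (fun i => wNn i • e i) := summable_of_dom hlat (ha n) hdomN
    have hsumF : Summable (fun i => wFn i • e i) := summable_of_dom hlat (ha n) hdomF
    have hsuppN : ∀ i ∈ Function.support wNn, i < kn := by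
      intro i hi
      simp only [Function.mem_support] at hi
      by_contra hlt
      exact hi (by rw [hwN]; beta_reduce; rw [if_neg hlt])
    have hsuppF : ∀ j ∈ Function.support wFn, kn < j := by
      intro j hj
      simp only [Function.mem_support] at hj
      by_contra hlt
      exact hj (by rw [hwF]; beta_reduce; rw [if_neg hlt])
    have hcomp : ∀ (w : ℕ → ℝ) (z : X), HasSum (fun i => w i • e i) z →
        HasSum (fun i => w i * ubar he hlat hone a i₀ n (P (e i)))
          (ubar he hlat hone a i₀ n (P z)) := by
      intro w z hz
      have h1 := ((ubar he hlat hone a i₀ n).comp P).hasSum hz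
      have h2 : (fun i => ((ubar he hlat hone a i₀ n).comp P) (w i • e i)) =
          fun i => w i * ubar he hlat hone a i₀ n (P (e i)) := by
        funext i
        rw [ContinuousLinearMap.comp_apply, map_smul, map_smul, smul_eq_mul]
      rw [h2] at h1
      exact h1
    have hheadsum : HasSum (fun i => wNn i * ubar he hlat hone a i₀ n (P (e i)))
        (∑ i ∈ Finset.range kn, q i) := by
      have h2 : (fun i => wNn i * ubar he hlat hone a i₀ n (P (e i))) =
          fun i => if i < kn then q i else 0 := by
        funext i
        rw [hwN]
        beta_reduce
        split
        · rw [mul_assoc, hθmul i]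
        · rw [zero_mul]
      rw [h2]
      have h4 := hasSum_sum_of_ne_finset_zero (s := Finset.range kn) (L := SummationFilter.unconditional ℕ)
        (f := fun i => if i < kn then q i else 0)
        (fun i hi => by beta_reduce; rw [if_neg (by simpa using hi)])
      have h5 : ∑ i ∈ Finset.range kn, (if i < kn then q i else 0) =
          ∑ i ∈ Finset.range kn, q i :=
        Finset.sum_congr rfl fun i hi => if_pos (Finset.mem_range.mp hi)
      rwa [h5] at h4
    have htailsum : HasSum (fun i => wFn i * ubar he hlat hone a i₀ n (P (e i)))
        ((∑' i, q i) - ∑ i ∈ Finset.range (kn+1), q i) := by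
      have h3 : HasSum (fun i => if i < kn+1 then q i else 0)
          (∑ i ∈ Finset.range (kn+1), q i) := by
        have h4 := hasSum_sum_of_ne_finset_zero (s := Finset.range (kn+1)) (L := SummationFilter.unconditional ℕ)
          (f := fun i => if i < kn+1 then q i else 0)
          (fun i hi => by beta_reduce; rw [if_neg (by simpa using hi)])
        have h5 : ∑ i ∈ Finset.range (kn+1), (if i < kn+1 then q i else 0) =
            ∑ i ∈ Finset.range (kn+1), q i :=
          Finset.sum_congr rfl fun i hi => if_pos (Finset.mem_range.mp hi)
        rwa [h5] at h4
      have h6 := hqsum.hasSum.sub h3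
      have h7 : (fun i => q i - (if i < kn+1 then q i else 0)) =
          fun i => wFn i * ubar he hlat hone a i₀ n (P (e i)) := by
        funext i
        rw [hwF]
        beta_reduce
        by_cases hi : kn < i
        · rw [if_pos hi, if_neg (by omega), sub_zero, mul_assoc, hθmul i]
        · rw [if_neg hi, if_pos (by omega), zero_mul, sub_self]
      rw [h7] at h6
      exact h6
    refine ⟨kn, ∑' i, wNn i • e i, ∑' i, wFn i • e i, wNn, wFn, hank,
      fun hc => absurd hc hS1, hsumN.hasSum, hsumF.hasSum, hdomN, hdomF,
      hsuppN, hsuppF, fun _ => ⟨?_, ?_⟩⟩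
    · have hv := (hcomp wNn _ hsumN.hasSum).unique hheadsum
      rw [hv]
      nlinarith
    · have hv := (hcomp wFn _ hsumF.hasSum).unique htailsum
      rw [hv]
      nlinarith

lemma finish_perm (hone : ∀ j, ‖e j‖ = 1) (u : ℕ → X) (κ : ℕ → ℕ)
    (hκinj : Function.Injective κ) (C : ℝ) (hC : 0 < C)
    (hEST : ∀ (c : ℕ → ℝ) (s : Finset ℕ),
      ‖∑ n ∈ s, c n • e (κ n)‖ ≤ C * ‖∑ n ∈ s, c n • u n‖ ∧
        ‖∑ n ∈ s, c n • u n‖ ≤ C * ‖∑ n ∈ s, c n • e (κ n)‖) :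
    ∃ k : ℕ → ℕ, StrictMono k ∧ PermutativelyEquiv u (fun n => e (k n)) := by
  classical
  have hinf : (Set.range κ).Infinite := Set.infinite_range_of_injective hκinj
  haveI := hinf.to_subtype
  set k' : ℕ ↪o ℕ := Nat.orderEmbeddingOfSet (Set.range κ) with hk'
  have hrange : Set.range ⇑k' = Set.range κ := Nat.orderEmbeddingOfSet_range _
  have hmem : ∀ n, ∃ m, k' m = κ n := by
    intro n
    have h1 : κ n ∈ Set.range ⇑k' := by
      rw [hrange]
      exact ⟨n, rfl⟩
    exact h1
  choose f hf using hmem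
  have hfinj : Function.Injective f := by
    intro n m h
    apply hκinj
    rw [← hf n, ← hf m, h]
  have hfsurj : Function.Surjective f := by
    intro m
    have h1 : k' m ∈ Set.range κ := by
      rw [← hrange]
      exact ⟨m, rfl⟩
    obtain ⟨n, hn⟩ := h1
    refine ⟨n, k'.injective ?_⟩
    rw [hf n, hn]
  refine ⟨⇑k', k'.strictMono, Equiv.ofBijective f ⟨hfinj, hfsurj⟩, C⁻¹, C,
    inv_pos.mpr hC, ?_⟩
  intro c s
  have hconv : ∑ i ∈ s, c i • e (k' ((Equiv.ofBijective f ⟨hfinj, hfsurj⟩) i)) =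
      ∑ i ∈ s, c i • e (κ i) := by
    refine Finset.sum_congr rfl fun i _ => ?_
    have h1 : k' ((Equiv.ofBijective f ⟨hfinj, hfsurj⟩) i) = κ i := hf i
    rw [h1]
  constructor
  · beta_reduce
    rw [hconv]
    have h1 := (hEST c s).2
    have h2 : C⁻¹ * C = 1 := inv_mul_cancel₀ (ne_of_gt hC)
    calc C⁻¹ * ‖∑ i ∈ s, c i • u i‖ ≤ C⁻¹ * (C * ‖∑ i ∈ s, c i • e (κ i)‖) :=
          mul_le_mul_of_nonneg_left h1 (le_of_lt (inv_pos.mpr hC))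
      _ = ‖∑ i ∈ s, c i • e (κ i)‖ := by rw [← mul_assoc, h2, one_mul]
  · beta_reduce
    rw [hconv]
    exact (hEST c s).1

end proof3

/-- Theorem 5.6. Let `X` be a separable left- or right-dominant sequence
space with canonical basis `e`, and let `(u n)` be a normalized sequence of pairwise disjointly
supported vectors whose closed span is the range of a bounded projection on `X`. Then `(u n)`
is permutatively equivalent to a subsequence of `e`. -/
theorem statement3
    {X : Type*} [NormedAddCommGroup X] [NormedSpace ℝ X] [CompleteSpace X]
    (e : ℕ → X) (he : IsUnconditionalBasis e) (hone : ∀ j, ‖e j‖ = 1)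
    (hlat : ∀ a b : ℕ → ℝ, (Function.support a).Finite → (Function.support b).Finite →
      (∀ i, |a i| ≤ |b i|) → ‖vecSum e a‖ ≤ ‖vecSum e b‖)
    (hdom : IsLeftDominant e ∨ IsRightDominant e)
    (u : ℕ → X) (hnorm : ∀ n, ‖u n‖ = 1)
    (a : ℕ → ℕ → ℝ) (ha : ∀ n, HasSum (fun i => a n i • e i) (u n))
    (hdisj : Pairwise fun m n => Disjoint (Function.support (a m)) (Function.support (a n)))
    (hcompl : IsComplementedSeq u) :
    ∃ k : ℕ → ℕ, StrictMono k ∧ PermutativelyEquiv u (fun n => e (k n)) := by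
  classical
  obtain ⟨P, hP2, hPr⟩ := hcompl
  have hlat' : LatNorm e := hlat
  have hane : ∀ m : ℕ, ∃ i, a m i ≠ 0 := by
    intro m
    by_contra hcon
    push_neg at hcon
    have h1 : HasSum (fun i : ℕ => (0:X)) (u m) := by
      have h0 := ha m
      convert h0 using 1
      funext i
      rw [hcon i, zero_smul]
    have h2 : u m = 0 := h1.unique hasSum_zero
    have h3 := hnorm m
    rw [h2, norm_zero] at h3
    norm_num at h3
  choose i₀ hi₀ using hane
  have hPrange : ∀ z, P z ∈ spanCl u := by
    intro z
    have h1 : P z ∈ LinearMap.range (P : X →ₗ[ℝ] X) := ⟨z, rfl⟩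
    rwa [hPr] at h1
  have hPfix : ∀ y ∈ spanCl u, P y = y := by
    intro y hy
    rw [← hPr] at hy
    obtain ⟨z, hz⟩ := hy
    simp only [ContinuousLinearMap.coe_coe] at hz
    have h2 : P (P z) = P z := by
      have h3 := congrArg (fun T : X →L[ℝ] X => T z) hP2
      simpa using h3
    rw [← hz]
    exact h2
  set K := max 1 ‖P‖ with hKdef
  have hK1 : (1:ℝ) ≤ K := le_max_left _ _
  have hK : ∀ z, ‖P z‖ ≤ K * ‖z‖ := fun z =>
    le_trans (P.le_opNorm z)
      (mul_le_mul_of_nonneg_right (le_max_right _ _) (norm_nonneg z))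
  choose κ Nv Fv wN wF hκa hS1ab hNsum hFsum hNdom hFdom hordN hordF hS2NF using
    fun n => per_n he hlat' hone ha hnorm hdisj i₀ hi₀ P hPrange hPfix K hK1 hK n
  have hκinj : ∀ n m, n ≠ m → κ n ≠ κ m := by
    intro n m hnm hEq
    have h1 : κ n ∈ Function.support (a n) := hκa n
    have h2 : κ n ∈ Function.support (a m) := by
      rw [hEq]
      exact hκa m
    exact Set.disjoint_left.mp (hdisj hnm) h1 h2
  have hκinj' : Function.Injective κ := by
    intro n m h
    by_contra hne
    exact hκinj n m hne h
  have hCpos : ∀ γ : ℝ, 1 ≤ γ → (0:ℝ) < 4 * K * (1 + γ) := by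
    intro γ hγ1
    nlinarith
  rcases hdom with ⟨γ, hγ1, hkeyL⟩ | ⟨γ, hγ1, hkeyR⟩
  · refine finish_perm hone u κ hκinj' (4 * K * (1 + γ)) (hCpos γ hγ1) ?_
    intro c s
    exact main_estimates he hlat' hone ha hnorm hdisj i₀ hi₀ P hPrange K hK1 hK hγ1
      (fun i j => i < j) hkeyL κ hκinj
      (fun n => ∃ i, (1/4:ℝ) ≤ |a n i * ubar he hlat' hone a i₀ n (P (e i))|)
      (fun n hs => (hS1ab n hs).1) (fun n hs => (hS1ab n hs).2)
      Nv Fv wN wF hNsum hFsum hNdom hFdom hordN hordF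
      (fun n hs => (hS2NF n hs).1) (fun n hs => (hS2NF n hs).2) c s
  · have hkey' : ∀ (m : ℕ) (U V : Fin m → ℕ → ℝ),
        (∀ k, (Function.support (U k)).Finite) → (∀ k, (Function.support (V k)).Finite) →
        (Pairwise fun k l => Disjoint (Function.support (U k)) (Function.support (U l))) →
        (Pairwise fun k l => Disjoint (Function.support (V k)) (Function.support (V l))) →
        (∀ k, ∀ i ∈ Function.support (U k), ∀ j ∈ Function.support (V k), j < i) →
        (∀ k, ‖vecSum e (V k)‖ ≤ ‖vecSum e (U k)‖) →
        ‖vecSum e (fun i => ∑ k, V k i)‖ ≤ γ * ‖vecSum e (fun i => ∑ k, U k i)‖ := by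
      intro m U V fU fV pU pV hord hnrm
      exact hkeyR m V U fV fU pV pU (fun k i hi j hj => hord k j hj i hi) hnrm
    refine finish_perm hone u κ hκinj' (4 * K * (1 + γ)) (hCpos γ hγ1) ?_
    intro c s
    exact main_estimates he hlat' hone ha hnorm hdisj i₀ hi₀ P hPrange K hK1 hK hγ1
      (fun i j => j < i) hkey' κ hκinj
      (fun n => ∃ i, (1/4:ℝ) ≤ |a n i * ubar he hlat' hone a i₀ n (P (e i))|)
      (fun n hs => (hS1ab n hs).1) (fun n hs => (hS1ab n hs).2)
      Fv Nv wF wN hFsum hNsum hFdom hNdom hordF hordN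
      (fun n hs => (hS2NF n hs).2) (fun n hs => (hS2NF n hs).1) c s


end CK
end
end

section
/- A sequence space X is left-dominant with constant γ if and only if its dual Köthe sequence space X* is right-dominant with constant γ. -/
open Function Filter
open scoped BigOperators ENNReal

noncomputable section

namespace CK

/-- The duality pairing `∑ |f n g n|` in `ℝ≥0∞`. -/
private def pairCK (f g : ℕ → ℝ) : ℝ≥0∞ := ∑' n, ENNReal.ofReal |f n * g n|

private lemma kotheDual_def (N : (ℕ → ℝ) → ℝ≥0∞) (f : ℕ → ℝ) :
    kotheDual N f = ⨆ g : {g : ℕ → ℝ // N g ≤ 1}, pairCK f (g : ℕ → ℝ) := rfl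

private lemma pairCK_comm (f g : ℕ → ℝ) : pairCK f g = pairCK g f := by
  simp [pairCK, mul_comm]

private lemma pairCK_mono_right (f g g' : ℕ → ℝ) (h : ∀ n, |g n| ≤ |g' n|) :
    pairCK f g ≤ pairCK f g' := by
  refine Summable.tsum_le_tsum (fun n => ENNReal.ofReal_le_ofReal ?_) ENNReal.summable ENNReal.summable
  rw [abs_mul, abs_mul]
  exact mul_le_mul_of_nonneg_left (h n) (abs_nonneg _)

private lemma pairCK_mono_left (f f' g : ℕ → ℝ) (h : ∀ n, |f n| ≤ |f' n|) :
    pairCK f g ≤ pairCK f' g := by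
  rw [pairCK_comm f g, pairCK_comm f' g]; exact pairCK_mono_right _ _ _ h

private lemma pairCK_smul_right (f g : ℕ → ℝ) (c : ℝ) :
    pairCK f (c • g) = ENNReal.ofReal |c| * pairCK f g := by
  unfold pairCK
  rw [← ENNReal.tsum_mul_left]
  congr 1; funext n
  rw [Pi.smul_apply, smul_eq_mul, show f n * (c * g n) = c * (f n * g n) by ring, abs_mul,
    ENNReal.ofReal_mul (abs_nonneg c)]

private lemma pairCK_smul_left (f g : ℕ → ℝ) (c : ℝ) :
    pairCK (c • f) g = ENNReal.ofReal |c| * pairCK f g := by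
  rw [pairCK_comm, pairCK_smul_right, pairCK_comm]

private lemma pairCK_add_left (f f' g : ℕ → ℝ) :
    pairCK (f + f') g ≤ pairCK f g + pairCK f' g := by
  unfold pairCK
  rw [← ENNReal.tsum_add]
  refine Summable.tsum_le_tsum (fun n => ?_) ENNReal.summable ENNReal.summable
  refine le_trans (ENNReal.ofReal_le_ofReal ?_) (ENNReal.ofReal_add_le)
  rw [Pi.add_apply, add_mul]
  exact abs_add_le _ _

private lemma pairCK_indicator_right (f g : ℕ → ℝ) (s : Set ℕ) (hs : Function.support f ⊆ s) :
    pairCK f (s.indicator g) = pairCK f g := by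
  unfold pairCK
  congr 1; funext n
  by_cases hn : n ∈ s
  · rw [Set.indicator_of_mem hn]
  · have hf : f n = 0 := by
      by_contra hf; exact hn (hs hf)
    simp [hf]

private lemma pairCK_single_left (j : ℕ) (c : ℝ) (g : ℕ → ℝ) :
    pairCK (Pi.single j c) g = ENNReal.ofReal |c * g j| := by
  unfold pairCK
  rw [tsum_eq_single j (fun n hn => by rw [Pi.single_eq_of_ne hn]; simp), Pi.single_eq_same]

private lemma le_kotheDual (N : (ℕ → ℝ) → ℝ≥0∞) {g : ℕ → ℝ} (hg : N g ≤ 1) (f : ℕ → ℝ) :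
    pairCK f g ≤ kotheDual N f :=
  le_iSup (fun g : {g : ℕ → ℝ // N g ≤ 1} => pairCK f (g : ℕ → ℝ)) ⟨g, hg⟩


section Koethe
variable {N : (ℕ → ℝ) → ℝ≥0∞}

private lemma single_eq_smul (j : ℕ) (c : ℝ) : (Pi.single j c : ℕ → ℝ) = c • (Pi.single j 1 : ℕ → ℝ) := by
  funext i
  by_cases h : i = j <;> simp [Pi.single_apply, h]

private lemma ofReal_abs_apply_le
    (hsmul : ∀ (c : ℝ) (x : ℕ → ℝ), N (c • x) = ENNReal.ofReal |c| * N x)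
    (hmono : ∀ x y : ℕ → ℝ, (∀ i, |x i| ≤ |y i|) → N x ≤ N y)
    (hone : ∀ j : ℕ, N (Pi.single j 1) = 1) (g : ℕ → ℝ) (j : ℕ) :
    ENNReal.ofReal |g j| ≤ N g := by
  have h1 : N (Pi.single j (g j)) = ENNReal.ofReal |g j| := by
    rw [single_eq_smul, hsmul, hone, mul_one]
  rw [← h1]
  refine hmono _ _ (fun i => ?_)
  by_cases h : i = j
  · subst h; simp
  · simp [Pi.single_eq_of_ne h, abs_nonneg]

private lemma kotheDual_single_le
    (hsmul : ∀ (c : ℝ) (x : ℕ → ℝ), N (c • x) = ENNReal.ofReal |c| * N x)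
    (hmono : ∀ x y : ℕ → ℝ, (∀ i, |x i| ≤ |y i|) → N x ≤ N y)
    (hone : ∀ j : ℕ, N (Pi.single j 1) = 1) (j : ℕ) (c : ℝ) :
    kotheDual N (Pi.single j c) ≤ ENNReal.ofReal |c| := by
  rw [kotheDual_def]
  refine iSup_le ?_
  rintro ⟨g, hg⟩
  rw [pairCK_single_left, abs_mul, ENNReal.ofReal_mul (abs_nonneg c)]
  calc ENNReal.ofReal |c| * ENNReal.ofReal |g j|
      ≤ ENNReal.ofReal |c| * 1 :=
        mul_le_mul_right (le_trans (ofReal_abs_apply_le hsmul hmono hone g j) hg) _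
    _ = ENNReal.ofReal |c| := mul_one _

private lemma kotheDual_mono (x y : ℕ → ℝ) (h : ∀ i, |x i| ≤ |y i|) :
    kotheDual N x ≤ kotheDual N y := by
  rw [kotheDual_def, kotheDual_def]
  refine iSup_le ?_
  rintro ⟨g, hg⟩
  exact le_trans (pairCK_mono_left _ _ _ h) (le_kotheDual N hg y)

private lemma kotheDual_zero_le : kotheDual N 0 ≤ 0 := by
  rw [kotheDual_def]
  refine iSup_le ?_
  rintro ⟨g, hg⟩
  simp [pairCK]

private lemma kotheDual_add_le (x y : ℕ → ℝ) :
    kotheDual N (x + y) ≤ kotheDual N x + kotheDual N y := by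
  rw [kotheDual_def]
  refine iSup_le ?_
  rintro ⟨g, hg⟩
  exact le_trans (pairCK_add_left x y g)
    (add_le_add (le_kotheDual N hg x) (le_kotheDual N hg y))

private lemma kotheDual_sum_le (s : Finset ℕ) (F : ℕ → ℕ → ℝ) :
    kotheDual N (∑ j ∈ s, F j) ≤ ∑ j ∈ s, kotheDual N (F j) := by
  classical
  induction s using Finset.induction with
  | empty => simpa using kotheDual_zero_le
  | insert j s hj ih =>
      rw [Finset.sum_insert hj, Finset.sum_insert hj]
      exact le_trans (kotheDual_add_le _ _) (add_le_add le_rfl ih)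

private lemma kotheDual_fin
    (hsmul : ∀ (c : ℝ) (x : ℕ → ℝ), N (c • x) = ENNReal.ofReal |c| * N x)
    (hmono : ∀ x y : ℕ → ℝ, (∀ i, |x i| ≤ |y i|) → N x ≤ N y)
    (hone : ∀ j : ℕ, N (Pi.single j 1) = 1)
    (x : ℕ → ℝ) (hx : (Function.support x).Finite) : kotheDual N x < ⊤ := by
  classical
  have hxe : x = ∑ j ∈ hx.toFinset, (Pi.single j (x j) : ℕ → ℝ) := by
    funext i
    rw [Finset.sum_apply, Finset.sum_pi_single]
    by_cases h : i ∈ hx.toFinset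
    · simp [h]
    · simp only [h, if_false]
      by_contra hxi
      exact h (hx.mem_toFinset.2 hxi)
  calc kotheDual N x = kotheDual N (∑ j ∈ hx.toFinset, (Pi.single j (x j) : ℕ → ℝ)) := by
        rw [← hxe]
    _ ≤ ∑ j ∈ hx.toFinset, kotheDual N (Pi.single j (x j)) := kotheDual_sum_le _ _
    _ ≤ ∑ j ∈ hx.toFinset, ENNReal.ofReal |x j| :=
        Finset.sum_le_sum fun j _ => kotheDual_single_le hsmul hmono hone j (x j)
    _ < ⊤ := ENNReal.sum_lt_top.2 fun j _ => ENNReal.ofReal_lt_top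

private lemma pairCK_le_mul
    (hzero : ∀ x : ℕ → ℝ, N x = 0 ↔ x = 0)
    (hsmul : ∀ (c : ℝ) (x : ℕ → ℝ), N (c • x) = ENNReal.ofReal |c| * N x)
    (f g : ℕ → ℝ) (hgt : N g ≠ ⊤) : pairCK f g ≤ kotheDual N f * N g := by
  rcases eq_or_ne (N g) 0 with h0 | h0
  · have hg0 : g = 0 := (hzero g).1 h0
    subst hg0
    simp [pairCK]
  · set lam := (N g).toReal with hl
    have hlpos : 0 < lam := ENNReal.toReal_pos h0 hgt
    have hNg : ENNReal.ofReal lam = N g := ENNReal.ofReal_toReal hgt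
    have hg1 : N (lam⁻¹ • g) ≤ 1 := by
      rw [hsmul, abs_of_pos (inv_pos.2 hlpos), ← hNg,
        ← ENNReal.ofReal_mul (inv_pos.2 hlpos).le, inv_mul_cancel₀ hlpos.ne', ENNReal.ofReal_one]
    have hgeq : pairCK f g = ENNReal.ofReal lam * pairCK f (lam⁻¹ • g) := by
      rw [pairCK_smul_right, abs_of_pos (inv_pos.2 hlpos), ← mul_assoc,
        ← ENNReal.ofReal_mul hlpos.le, mul_inv_cancel₀ hlpos.ne', ENNReal.ofReal_one, one_mul]
    rw [hgeq, ← hNg, mul_comm (kotheDual N f)]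
    exact mul_le_mul_right (le_kotheDual N hg1 f) _

end Koethe

section Families
variable {N : (ℕ → ℝ) → ℝ≥0∞}

private lemma pairCK_sum_le {n : ℕ} (a : Fin n → ℕ → ℝ) (g : ℕ → ℝ) :
    pairCK (fun i => ∑ k, a k i) g ≤ ∑ k, pairCK (a k) g := by
  unfold pairCK
  rw [← Summable.tsum_finsetSum (fun k _ => ENNReal.summable)]
  refine Summable.tsum_le_tsum (fun i => ?_) ENNReal.summable ENNReal.summable
  calc ENNReal.ofReal |(∑ k, a k i) * g i| = ENNReal.ofReal |∑ k, a k i * g i| := by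
        rw [Finset.sum_mul]
    _ ≤ ENNReal.ofReal (∑ k, |a k i * g i|) :=
        ENNReal.ofReal_le_ofReal (Finset.abs_sum_le_sum_abs _ _)
    _ = ∑ k, ENNReal.ofReal |a k i * g i| :=
        ENNReal.ofReal_sum_of_nonneg (fun k _ => abs_nonneg _)

private lemma sum_indicator_abs_le {n : ℕ} (a : Fin n → ℕ → ℝ)
    (hd : Pairwise fun k l => Disjoint (Function.support (a k)) (Function.support (a l)))
    (g : ℕ → ℝ) (i : ℕ) :
    |∑ k, (Function.support (a k)).indicator g i| ≤ |g i| := by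
  classical
  by_cases hex : ∃ k, i ∈ Function.support (a k)
  · obtain ⟨k, hk⟩ := hex
    have heq : ∑ k', (Function.support (a k')).indicator g i
        = (Function.support (a k)).indicator g i := by
      refine Finset.sum_eq_single k (fun l _ hl => ?_) (fun h => absurd (Finset.mem_univ k) h)
      exact Set.indicator_of_notMem (fun hi => Set.disjoint_left.1 (hd hl) hi hk) g
    rw [heq, Set.indicator_of_mem hk]
  · push_neg at hex
    rw [Finset.sum_eq_zero (fun k _ => Set.indicator_of_notMem (hex k) g)]
    simp [abs_nonneg]

private lemma sum_pairCK_le_pairCK_sum {n : ℕ} (a b : Fin n → ℕ → ℝ)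
    (hd : Pairwise fun k l => Disjoint (Function.support (a k)) (Function.support (a l)))
    (hsub : ∀ k, Function.support (b k) ⊆ Function.support (a k)) :
    ∑ k, pairCK (a k) (b k) ≤ pairCK (fun i => ∑ k, a k i) (fun i => ∑ k, b k i) := by
  classical
  unfold pairCK
  rw [← Summable.tsum_finsetSum (fun k _ => ENNReal.summable)]
  refine Summable.tsum_le_tsum (fun i => ?_) ENNReal.summable ENNReal.summable
  by_cases hex : ∃ k, b k i ≠ 0
  · obtain ⟨k, hk⟩ := hex
    have hik : i ∈ Function.support (a k) := hsub k hk
    have hbl : ∀ l, l ≠ k → b l i = 0 := fun l hl => by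
      by_contra hbl
      exact Set.disjoint_left.1 (hd hl) (hsub l hbl) hik
    have hal : ∀ l, l ≠ k → a l i = 0 := fun l hl => by
      by_contra hal
      exact Set.disjoint_left.1 (hd hl) hal hik
    have ha : ∑ l, a l i = a k i :=
      Finset.sum_eq_single k (fun l _ hl => hal l hl) (fun h => absurd (Finset.mem_univ k) h)
    have hb : ∑ l, b l i = b k i :=
      Finset.sum_eq_single k (fun l _ hl => hbl l hl) (fun h => absurd (Finset.mem_univ k) h)
    have hs : ∑ l, ENNReal.ofReal |a l i * b l i| = ENNReal.ofReal |a k i * b k i| :=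
      Finset.sum_eq_single k (fun l _ hl => by rw [hbl l hl]; simp)
        (fun h => absurd (Finset.mem_univ k) h)
    rw [hs]
    simp only []
    rw [ha, hb]
  · push_neg at hex
    rw [Finset.sum_eq_zero (fun k _ => by rw [hex k]; simp)]
    exact zero_le

end Families

private theorem core_dual (N : (ℕ → ℝ) → ℝ≥0∞)
    (hzero : ∀ x : ℕ → ℝ, N x = 0 ↔ x = 0)
    (hsmul : ∀ (c : ℝ) (x : ℕ → ℝ), N (c • x) = ENNReal.ofReal |c| * N x)
    (hmono : ∀ x y : ℕ → ℝ, (∀ i, |x i| ≤ |y i|) → N x ≤ N y)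
    (hone : ∀ j : ℕ, N (Pi.single j 1) = 1)
    (hfin : ∀ x : ℕ → ℝ, (Function.support x).Finite → N x < ⊤)
    (γ : ℝ) (hγ0 : 0 < γ) (n : ℕ) (p q : Fin n → ℕ → ℝ)
    (hp : ∀ k, (Function.support (p k)).Finite) (hq : ∀ k, (Function.support (q k)).Finite)
    (hdp : Pairwise fun k l => Disjoint (Function.support (p k)) (Function.support (p l)))
    (hdq : Pairwise fun k l => Disjoint (Function.support (q k)) (Function.support (q l)))
    (hD : ∀ k, kotheDual N (p k) ≤ kotheDual N (q k))
    (Hdom : ∀ a b : Fin n → ℕ → ℝ, (∀ k, Function.support (a k) ⊆ Function.support (p k)) →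
      (∀ k, Function.support (b k) ⊆ Function.support (q k)) → (∀ k, N (b k) ≤ N (a k)) →
      N (fun i => ∑ k, b k i) ≤ ENNReal.ofReal γ * N (fun i => ∑ k, a k i)) :
    kotheDual N (fun i => ∑ k, p k i) ≤ ENNReal.ofReal γ * kotheDual N (fun i => ∑ k, q k i) := by
  classical
  rw [kotheDual_def]
  refine iSup_le ?_
  rintro ⟨g, hg⟩
  set gk : Fin n → ℕ → ℝ := fun k => (Function.support (p k)).indicator g with hgkdef
  have hgksub : ∀ k, Function.support (gk k) ⊆ Function.support (p k) :=
    fun k => Set.support_indicator_subset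
  have hNgk_ne : ∀ k, N (gk k) ≠ ⊤ := fun k => (hfin _ ((hp k).subset (hgksub k))).ne
  have step1 : pairCK (fun i => ∑ k, p k i) g ≤ ∑ k, kotheDual N (q k) * N (gk k) := by
    calc pairCK (fun i => ∑ k, p k i) g ≤ ∑ k, pairCK (p k) g := pairCK_sum_le p g
      _ = ∑ k, pairCK (p k) (gk k) :=
          Finset.sum_congr rfl fun k _ =>
            (pairCK_indicator_right (p k) g _ subset_rfl).symm
      _ ≤ ∑ k, kotheDual N (p k) * N (gk k) :=
          Finset.sum_le_sum fun k _ => pairCK_le_mul hzero hsmul (p k) (gk k) (hNgk_ne k)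
      _ ≤ ∑ k, kotheDual N (q k) * N (gk k) :=
          Finset.sum_le_sum fun k _ => mul_le_mul_left (hD k) _
  refine step1.trans ?_
  apply ENNReal.le_of_forall_pos_le_add
  intro ε hε _
  set C : ℝ≥0∞ := ∑ k, N (gk k) with hC
  have hC_ne : C ≠ ⊤ := (ENNReal.sum_lt_top.2 fun k _ => (hNgk_ne k).lt_top).ne
  set ε₀ : ℝ≥0∞ := (ε : ℝ≥0∞) / (C + 1) with hε₀def
  have hCa_ne : C + 1 ≠ ⊤ := by
    simp [ENNReal.add_eq_top, hC_ne]
  have hCa_ne0 : C + 1 ≠ 0 := by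
    simp
  have hε₀0 : ε₀ ≠ 0 := by
    rw [hε₀def]
    simp [ENNReal.div_eq_zero_iff, hCa_ne, ENNReal.coe_ne_zero, hε.ne']
  have hch : ∀ k, ∃ h : ℕ → ℝ, N h ≤ 1 ∧ Function.support h ⊆ Function.support (q k) ∧
      kotheDual N (q k) ≤ pairCK (q k) h + ε₀ := by
    intro k
    rcases eq_or_ne (kotheDual N (q k)) 0 with h0 | h0
    · refine ⟨0, ?_, ?_, ?_⟩
      · rw [(hzero 0).2 rfl]; exact zero_le
      · simp
      · rw [h0]; exact zero_le
    · have hlt : kotheDual N (q k) - ε₀ < kotheDual N (q k) :=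
        ENNReal.sub_lt_self (kotheDual_fin hsmul hmono hone (q k) (hq k)).ne h0 hε₀0
      rw [kotheDual_def N (q k), lt_iSup_iff] at hlt
      obtain ⟨⟨h0', hh'⟩, hlt'⟩ := hlt
      refine ⟨(Function.support (q k)).indicator h0', ?_, Set.support_indicator_subset, ?_⟩
      · refine le_trans (hmono _ _ fun i => ?_) hh'
        rw [Set.indicator_apply]
        split
        · exact le_refl _
        · simp [abs_nonneg]
      · rw [pairCK_indicator_right (q k) h0' _ subset_rfl]
        exact tsub_le_iff_right.1 hlt'.le
  choose h hh1 hh2 hh3 using hch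
  set lam : Fin n → ℝ := fun k => (N (gk k)).toReal with hlamdef
  have hlamnn : ∀ k, 0 ≤ lam k := fun k => ENNReal.toReal_nonneg
  have hNgk_eq : ∀ k, ENNReal.ofReal (lam k) = N (gk k) := fun k =>
    ENNReal.ofReal_toReal (hNgk_ne k)
  set w : Fin n → ℕ → ℝ := fun k => lam k • h k with hwdef
  have hwsub : ∀ k, Function.support (w k) ⊆ Function.support (q k) := fun k =>
    (Function.support_const_smul_subset _ _).trans (hh2 k)
  have hNw : ∀ k, N (w k) ≤ N (gk k) := by
    intro k
    calc N (w k) = ENNReal.ofReal (lam k) * N (h k) := by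
          rw [hwdef]; simp only []
          rw [hsmul, abs_of_nonneg (hlamnn k)]
      _ ≤ ENNReal.ofReal (lam k) * 1 := mul_le_mul_right (hh1 k) _
      _ = N (gk k) := by rw [mul_one, hNgk_eq]
  have hdom := Hdom gk w hgksub hwsub hNw
  have hNsumgk : N (fun i => ∑ k, gk k i) ≤ 1 :=
    le_trans (hmono _ _ fun i => sum_indicator_abs_le p hdp g i) hg
  have hNtest : N (γ⁻¹ • fun i => ∑ k, w k i) ≤ 1 := by
    rw [hsmul, abs_of_pos (inv_pos.2 hγ0)]
    calc ENNReal.ofReal γ⁻¹ * N (fun i => ∑ k, w k i)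
        ≤ ENNReal.ofReal γ⁻¹ * (ENNReal.ofReal γ * N (fun i => ∑ k, gk k i)) :=
          mul_le_mul_right hdom _
      _ = N (fun i => ∑ k, gk k i) := by
          rw [← mul_assoc, ← ENNReal.ofReal_mul (inv_pos.2 hγ0).le,
            inv_mul_cancel₀ hγ0.ne', ENNReal.ofReal_one, one_mul]
      _ ≤ 1 := hNsumgk
  have hpair_le : pairCK (fun i => ∑ k, q k i) (fun i => ∑ k, w k i)
      ≤ ENNReal.ofReal γ * kotheDual N (fun i => ∑ k, q k i) := by
    have h1 : pairCK (fun i => ∑ k, q k i) (fun i => ∑ k, w k i)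
        = ENNReal.ofReal γ * pairCK (fun i => ∑ k, q k i) (γ⁻¹ • fun i => ∑ k, w k i) := by
      rw [pairCK_smul_right, abs_of_pos (inv_pos.2 hγ0), ← mul_assoc,
        ← ENNReal.ofReal_mul hγ0.le, mul_inv_cancel₀ hγ0.ne', ENNReal.ofReal_one, one_mul]
    rw [h1]
    exact mul_le_mul_right (le_kotheDual N hNtest _) _
  have hCmul : C * ε₀ ≤ ε := by
    calc C * ε₀ ≤ (C + 1) * ε₀ := mul_le_mul_left le_self_add _
      _ = ε := ENNReal.mul_div_cancel hCa_ne0 hCa_ne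
  calc ∑ k, kotheDual N (q k) * N (gk k)
      ≤ ∑ k, (pairCK (q k) (h k) + ε₀) * N (gk k) :=
        Finset.sum_le_sum fun k _ => mul_le_mul_left (hh3 k) _
    _ = ∑ k, pairCK (q k) (w k) + C * ε₀ := by
        rw [hC, Finset.sum_mul, ← Finset.sum_add_distrib]
        refine Finset.sum_congr rfl fun k _ => ?_
        rw [add_mul, hwdef]
        simp only []
        rw [pairCK_smul_right, abs_of_nonneg (hlamnn k), hNgk_eq, mul_comm (pairCK (q k) (h k)),
          mul_comm ε₀]
    _ ≤ pairCK (fun i => ∑ k, q k i) (fun i => ∑ k, w k i) + C * ε₀ :=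
        add_le_add_left (sum_pairCK_le_pairCK_sum q w hdq hwsub) _
    _ ≤ ENNReal.ofReal γ * kotheDual N (fun i => ∑ k, q k i) + C * ε₀ :=
        add_le_add_left hpair_le _
    _ ≤ ENNReal.ofReal γ * kotheDual N (fun i => ∑ k, q k i) + ε := add_le_add le_rfl hCmul

section DualProps
variable {N : (ℕ → ℝ) → ℝ≥0∞}

private lemma kotheDual_smul (c : ℝ) (x : ℕ → ℝ) :
    kotheDual N (c • x) = ENNReal.ofReal |c| * kotheDual N x := by
  rw [kotheDual_def, kotheDual_def, ENNReal.mul_iSup]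
  congr 1; funext g
  exact pairCK_smul_left x (g : ℕ → ℝ) c

private lemma kotheDual_zero_iff
    (hone : ∀ j : ℕ, N (Pi.single j 1) = 1) (x : ℕ → ℝ) :
    kotheDual N x = 0 ↔ x = 0 := by
  constructor
  · intro h0
    funext j
    rw [Pi.zero_apply]
    by_contra hj
    have h1 : pairCK x (Pi.single j 1) ≤ kotheDual N x :=
      le_kotheDual N (le_of_eq (hone j)) x
    rw [h0, nonpos_iff_eq_zero, pairCK_comm, pairCK_single_left] at h1
    rw [ENNReal.ofReal_eq_zero] at h1
    rw [one_mul] at h1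
    exact hj (abs_eq_zero.1 (le_antisymm h1 (abs_nonneg _)))
  · rintro rfl
    exact le_antisymm kotheDual_zero_le (zero_le)

private lemma kotheDual_one
    (hsmul : ∀ (c : ℝ) (x : ℕ → ℝ), N (c • x) = ENNReal.ofReal |c| * N x)
    (hmono : ∀ x y : ℕ → ℝ, (∀ i, |x i| ≤ |y i|) → N x ≤ N y)
    (hone : ∀ j : ℕ, N (Pi.single j 1) = 1) (j : ℕ) :
    kotheDual N (Pi.single j 1) = 1 := by
  refine le_antisymm ?_ ?_
  · have := kotheDual_single_le hsmul hmono hone j (1 : ℝ)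
    simpa using this
  · have h1 : pairCK (Pi.single j 1) (Pi.single j 1) ≤ kotheDual N (Pi.single j 1) :=
      le_kotheDual N (le_of_eq (hone j)) _
    rw [pairCK_single_left, Pi.single_eq_same] at h1
    simpa using h1

end DualProps

private def KNcar (s : Finset ℕ) : Type := ↥s → ℝ

private def extFun (s : Finset ℕ) (a : ↥s → ℝ) : ℕ → ℝ :=
  fun i => if h : i ∈ s then a ⟨i, h⟩ else 0

private lemma bidual_le (N : (ℕ → ℝ) → ℝ≥0∞)
    (hzero : ∀ x : ℕ → ℝ, N x = 0 ↔ x = 0)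
    (hsmul : ∀ (c : ℝ) (x : ℕ → ℝ), N (c • x) = ENNReal.ofReal |c| * N x)
    (hfin : ∀ x : ℕ → ℝ, (Function.support x).Finite → N x < ⊤)
    (x : ℕ → ℝ) (hx : (Function.support x).Finite) :
    kotheDual (kotheDual N) x ≤ N x := by
  rw [kotheDual_def]
  refine iSup_le ?_
  rintro ⟨f, hf⟩
  calc pairCK x f = pairCK f x := pairCK_comm _ _
    _ ≤ kotheDual N f * N x := pairCK_le_mul hzero hsmul f x (hfin x hx).ne
    _ ≤ 1 * N x := mul_le_mul_left hf _
    _ = N x := one_mul _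

private lemma le_bidual (N : (ℕ → ℝ) → ℝ≥0∞)
    (hzero : ∀ x : ℕ → ℝ, N x = 0 ↔ x = 0)
    (hsmul : ∀ (c : ℝ) (x : ℕ → ℝ), N (c • x) = ENNReal.ofReal |c| * N x)
    (hadd : ∀ x y : ℕ → ℝ, N (x + y) ≤ N x + N y)
    (hmono : ∀ x y : ℕ → ℝ, (∀ i, |x i| ≤ |y i|) → N x ≤ N y)
    (hfin : ∀ x : ℕ → ℝ, (Function.support x).Finite → N x < ⊤)
    (x : ℕ → ℝ) (hx : (Function.support x).Finite) :
    N x ≤ kotheDual (kotheDual N) x := by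
  classical
  rcases eq_or_ne x 0 with rfl | hx0
  · exact le_of_eq_of_le ((hzero 0).2 rfl) (zero_le)
  set s : Finset ℕ := hx.toFinset with hs
  letI : AddCommGroup (KNcar s) := inferInstanceAs (AddCommGroup (↥s → ℝ))
  letI : Module ℝ (KNcar s) := inferInstanceAs (Module ℝ (↥s → ℝ))
  have hextsupp : ∀ a : KNcar s, (Function.support (extFun s a)).Finite := by
    intro a
    refine s.finite_toSet.subset ?_
    intro i hi
    by_contra h
    exact hi (dif_neg (fun hh : i ∈ s => h (Finset.mem_coe.2 hh)))
  have hext_ne : ∀ a : KNcar s, N (extFun s a) ≠ ⊤ := fun a => (hfin _ (hextsupp a)).ne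
  have hext0 : extFun s (0 : KNcar s) = 0 := by
    funext i
    show (if h : i ∈ s then (0 : KNcar s) ⟨i, h⟩ else 0) = 0
    split <;> rfl
  have hextadd : ∀ a b : KNcar s, extFun s (a + b) = extFun s a + extFun s b := by
    intro a b
    funext i
    show (if h : i ∈ s then (a + b) ⟨i, h⟩ else 0)
      = (if h : i ∈ s then a ⟨i, h⟩ else 0) + (if h : i ∈ s then b ⟨i, h⟩ else 0)
    by_cases h : i ∈ s
    · rw [dif_pos h, dif_pos h, dif_pos h]; rfl
    · rw [dif_neg h, dif_neg h, dif_neg h]; simp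
  have hextsmul : ∀ (c : ℝ) (a : KNcar s), extFun s (c • a) = c • extFun s a := by
    intro c a
    funext i
    show (if h : i ∈ s then (c • a) ⟨i, h⟩ else 0) = c * (if h : i ∈ s then a ⟨i, h⟩ else 0)
    by_cases h : i ∈ s
    · rw [dif_pos h, dif_pos h]; rfl
    · rw [dif_neg h, dif_neg h]; simp
  have hextneg : ∀ a : KNcar s, extFun s (-a) = -extFun s a := by
    intro a
    have h1 : -a = (-1 : ℝ) • a := by rw [neg_one_smul]
    have h2 : -extFun s a = (-1 : ℝ) • extFun s a := by rw [neg_one_smul]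
    rw [h1, h2, hextsmul]
  letI : NormedAddCommGroup (KNcar s) := AddGroupNorm.toNormedAddCommGroup
    { toFun := fun a => (N (extFun s a)).toReal
      map_zero' := by
        show (N (extFun s 0)).toReal = 0
        exact (ENNReal.toReal_eq_zero_iff _).2 (Or.inl ((hzero _).2 hext0))
      add_le' := by
        intro a b
        simp only [hextadd]
        calc (N (extFun s a + extFun s b)).toReal
            ≤ (N (extFun s a) + N (extFun s b)).toReal :=
              ENNReal.toReal_mono
                (by simp [ENNReal.add_eq_top, hext_ne a, hext_ne b]) (hadd _ _)
          _ = (N (extFun s a)).toReal + (N (extFun s b)).toReal :=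
              ENNReal.toReal_add (hext_ne a) (hext_ne b)
      neg' := by
        intro a
        simp only [hextneg]
        have h1 : -extFun s a = (-1 : ℝ) • extFun s a := by rw [neg_one_smul]
        rw [h1, hsmul]
        simp
      eq_zero_of_map_eq_zero' := by
        intro a ha
        have h1 : N (extFun s a) = 0 := by
          rcases (ENNReal.toReal_eq_zero_iff _).1 ha with h | h
          · exact h
          · exact absurd h (hext_ne a)
        have h2 : extFun s a = 0 := (hzero _).1 h1
        funext j
        show a j = 0
        have h3 : extFun s a ↑j = a j := by
          obtain ⟨i, hi⟩ := j
          show (if h : i ∈ s then a ⟨i, h⟩ else 0) = a ⟨i, hi⟩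
          rw [dif_pos hi]
        rw [← h3, h2]
        rfl }
  letI : NormedSpace ℝ (KNcar s) := by
    refine ⟨fun c a => le_of_eq ?_⟩
    show (N (extFun s (c • a))).toReal = ‖c‖ * (N (extFun s a)).toReal
    rw [hextsmul, hsmul, ENNReal.toReal_mul, ENNReal.toReal_ofReal (abs_nonneg c),
      Real.norm_eq_abs]
  set xh : KNcar s := fun j => x ↑j with hxh
  have hxhat_ext : extFun s xh = x := by
    funext i
    show (if h : i ∈ s then x i else 0) = x i
    by_cases h : i ∈ s
    · rw [dif_pos h]
    · rw [dif_neg h]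
      by_contra hxi
      exact h (hx.mem_toFinset.2 (fun hc => hxi (Eq.symm hc)))
  have hnormx : ‖xh‖ = (N x).toReal := by
    show (N (extFun s xh)).toReal = (N x).toReal
    rw [hxhat_ext]
  have hxh0 : xh ≠ 0 := by
    obtain ⟨i, hxi⟩ := Function.ne_iff.1 hx0
    have hi : i ∈ s := hx.mem_toFinset.2 hxi
    intro hcon
    exact hxi (congrFun hcon ⟨i, hi⟩)
  obtain ⟨φ, hφ1, hφx⟩ := exists_dual_vector ℝ xh (norm_ne_zero_iff.2 hxh0)
  set sgl : ↥s → KNcar s := fun j => (Pi.single j (1 : ℝ) : ↥s → ℝ) with hsgl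
  set f : ℕ → ℝ := fun i => if h : i ∈ s then φ (sgl ⟨i, h⟩) else 0 with hf
  have hfval : ∀ j : ↥s, f ↑j = φ (sgl j) := by
    rintro ⟨i, hi⟩
    show (if h : i ∈ s then φ (sgl ⟨i, h⟩) else 0) = φ (sgl ⟨i, hi⟩)
    rw [dif_pos hi]
  have hfsupp : ∀ i, i ∉ s → f i = 0 := fun i hi => dif_neg hi
  have hφsum : ∀ a : KNcar s, φ a = ∑ j : ↥s, a j * f ↑j := by
    intro a
    have ha : a = ∑ j : ↥s, a j • sgl j := by
      have h1 : ∀ j : ↥s, (Pi.single j (a j) : ↥s → ℝ) = a j • (Pi.single j 1 : ↥s → ℝ) := by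
        intro j
        funext i
        by_cases h : i = j <;> simp [Pi.single_apply, h]
      have h2 := Finset.univ_sum_single (a : ↥s → ℝ)
      exact h2.symm.trans (Finset.sum_congr rfl fun j _ => h1 j)
    calc φ a = φ (∑ j : ↥s, a j • sgl j) := by rw [← ha]
      _ = ∑ j : ↥s, φ (a j • sgl j) := map_sum φ _ _
      _ = ∑ j : ↥s, a j * f ↑j := by
          refine Finset.sum_congr rfl fun j _ => ?_
          rw [map_smul, smul_eq_mul, hfval j]
  have hDf : kotheDual N f ≤ 1 := by
    rw [kotheDual_def]
    refine iSup_le ?_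
    rintro ⟨g, hg⟩
    have hNg_ne : N g ≠ ⊤ := (lt_of_le_of_lt hg ENNReal.one_lt_top).ne
    set a : KNcar s := fun j => if 0 ≤ f ↑j then |g ↑j| else -|g ↑j| with ha
    have haabs : ∀ j : ↥s, |a j| = |g ↑j| := by
      intro j
      rw [ha]
      simp only []
      split_ifs <;> simp [abs_abs]
    have hanorm : ‖a‖ ≤ 1 := by
      show (N (extFun s a)).toReal ≤ 1
      have h1 : N (extFun s a) ≤ N g := by
        refine hmono _ _ fun i => ?_
        by_cases h : i ∈ s
        · have he : extFun s a i = a ⟨i, h⟩ := dif_pos h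
          rw [he, haabs ⟨i, h⟩]
        · have he : extFun s a i = 0 := dif_neg h
          rw [he]; simp [abs_nonneg]
      calc (N (extFun s a)).toReal ≤ (N g).toReal := ENNReal.toReal_mono hNg_ne h1
        _ ≤ (1 : ℝ≥0∞).toReal := ENNReal.toReal_mono (by simp) hg
        _ = 1 := by simp
    have hsum1 : ∑ j : ↥s, a j * f ↑j = ∑ j : ↥s, |f ↑j * g ↑j| := by
      refine Finset.sum_congr rfl fun j _ => ?_
      rw [ha]
      simp only []
      split_ifs with h
      · rw [abs_mul, abs_of_nonneg h]; ring
      · push_neg at h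
        rw [abs_mul, abs_of_neg h]; ring
    have hle1 : ∑ j : ↥s, |f ↑j * g ↑j| ≤ 1 := by
      rw [← hsum1, ← hφsum a]
      calc φ a ≤ |φ a| := le_abs_self _
        _ = ‖φ a‖ := (Real.norm_eq_abs _).symm
        _ ≤ ‖φ‖ * ‖a‖ := φ.le_opNorm a
        _ = ‖a‖ := by rw [hφ1, one_mul]
        _ ≤ 1 := hanorm
    have hpair : pairCK f g = ENNReal.ofReal (∑ j : ↥s, |f ↑j * g ↑j|) := by
      unfold pairCK
      rw [tsum_eq_sum (s := s) (fun i hi => by rw [hfsupp i hi]; simp)]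
      rw [← Finset.sum_coe_sort s (fun i => ENNReal.ofReal |f i * g i|)]
      rw [ENNReal.ofReal_sum_of_nonneg (fun j _ => abs_nonneg _)]
    rw [hpair]
    exact ENNReal.ofReal_le_one.2 hle1
  have hNx_ne : N x ≠ ⊤ := (hfin x hx).ne
  have hcoe : φ xh = ‖xh‖ := by exact_mod_cast hφx
  have key : N x ≤ pairCK x f := by
    have h2 : (N x).toReal = φ xh := by rw [hcoe, hnormx]
    have h3 : (N x).toReal ≤ ∑ j : ↥s, |x ↑j * f ↑j| := by
      rw [h2, hφsum xh]
      exact le_trans (le_abs_self _) (Finset.abs_sum_le_sum_abs _ _)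
    have hxsupp : ∀ i, i ∉ s → x i = 0 := by
      intro i hi
      by_contra hxi
      exact hi (hx.mem_toFinset.2 hxi)
    have hpairx : pairCK x f = ENNReal.ofReal (∑ j : ↥s, |x ↑j * f ↑j|) := by
      unfold pairCK
      rw [tsum_eq_sum (s := s) (fun i hi => by rw [hxsupp i hi]; simp)]
      rw [← Finset.sum_coe_sort s (fun i => ENNReal.ofReal |x i * f i|)]
      rw [ENNReal.ofReal_sum_of_nonneg (fun j _ => abs_nonneg _)]
    calc N x = ENNReal.ofReal (N x).toReal := (ENNReal.ofReal_toReal hNx_ne).symm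
      _ ≤ ENNReal.ofReal (∑ j : ↥s, |x ↑j * f ↑j|) := ENNReal.ofReal_le_ofReal h3
      _ = pairCK x f := hpairx.symm
  exact le_trans key (le_kotheDual (kotheDual N) hDf x)

/-- Lemma 5.1. A sequence space `X` (given by its Köthe norm `N`, with
values in `[0,∞]`) is left-dominant with constant `γ` if and only if its Köthe dual `X*` is
right-dominant with constant `γ`. -/
theorem statement15 (N : (ℕ → ℝ) → ℝ≥0∞)
    (hzero : ∀ x : ℕ → ℝ, N x = 0 ↔ x = 0)
    (hsmul : ∀ (c : ℝ) (x : ℕ → ℝ), N (c • x) = ENNReal.ofReal |c| * N x)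
    (hadd : ∀ x y : ℕ → ℝ, N (x + y) ≤ N x + N y)
    (hmono : ∀ x y : ℕ → ℝ, (∀ i, |x i| ≤ |y i|) → N x ≤ N y)
    (hone : ∀ j : ℕ, N (Pi.single j 1) = 1)
    (hfin : ∀ x : ℕ → ℝ, (Function.support x).Finite → N x < ⊤)
    (γ : ℝ) (hγ : 1 ≤ γ) :
    ENormLeftDominant N γ ↔ ENormRightDominant (kotheDual N) γ := by
  have hγ0 : 0 < γ := lt_of_lt_of_le one_pos hγ
  have hsupp_sum : ∀ (n : ℕ) (w : Fin n → ℕ → ℝ), (∀ k, (Function.support (w k)).Finite) →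
      (Function.support fun i => ∑ k, w k i).Finite := by
    intro n w hw
    refine (Set.finite_iUnion hw).subset ?_
    intro i hi
    by_contra hcon
    simp only [Set.mem_iUnion, Function.mem_support, not_exists, not_not] at hcon
    exact hi (Finset.sum_eq_zero fun k _ => hcon k)
  constructor
  · intro hL n u v hu hv hdu hdv hord hle
    exact core_dual N hzero hsmul hmono hone hfin γ hγ0 n u v hu hv hdu hdv hle
      (fun a b ha hb hN =>
        hL n a b (fun k => (hu k).subset (ha k)) (fun k => (hv k).subset (hb k))
          (fun k l hkl => (hdu hkl).mono (ha k) (ha l))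
          (fun k l hkl => (hdv hkl).mono (hb k) (hb l))
          (fun k i hi j hj => hord k i (ha k hi) j (hb k hj)) hN)
  · intro hR
    have Mzero : ∀ x : ℕ → ℝ, kotheDual N x = 0 ↔ x = 0 := kotheDual_zero_iff hone
    have Msmul : ∀ (c : ℝ) (x : ℕ → ℝ),
        kotheDual N (c • x) = ENNReal.ofReal |c| * kotheDual N x := kotheDual_smul
    have Mmono : ∀ x y : ℕ → ℝ, (∀ i, |x i| ≤ |y i|) → kotheDual N x ≤ kotheDual N y :=
      kotheDual_mono
    have Mone : ∀ j : ℕ, kotheDual N (Pi.single j 1) = 1 := kotheDual_one hsmul hmono hone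
    have Mfin : ∀ x : ℕ → ℝ, (Function.support x).Finite → kotheDual N x < ⊤ :=
      kotheDual_fin hsmul hmono hone
    have hbid : ∀ y : ℕ → ℝ, (Function.support y).Finite →
        kotheDual (kotheDual N) y = N y := fun y hy =>
      le_antisymm (bidual_le N hzero hsmul hfin y hy)
        (le_bidual N hzero hsmul hadd hmono hfin y hy)
    intro n u v hu hv hdu hdv hord hle
    have hmain := core_dual (kotheDual N) Mzero Msmul Mmono Mone Mfin γ hγ0 n v u hv hu hdv hdu
      (fun k => by rw [hbid _ (hv k), hbid _ (hu k)]; exact hle k)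
      (fun a b ha hb hN =>
        hR n b a (fun k => (hu k).subset (hb k)) (fun k => (hv k).subset (ha k))
          (fun k l hkl => (hdu hkl).mono (hb k) (hb l))
          (fun k l hkl => (hdv hkl).mono (ha k) (ha l))
          (fun k i hi j hj => hord k i (hb k hi) j (ha k hj)) hN)
    rwa [hbid _ (hsupp_sum n v hv), hbid _ (hsupp_sum n u hu)] at hmain


end CK
end
end
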